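/- arXiv:0704.2516 — 9 statements merged into one kernel-verified Lean document; each statement's English description precedes it below -/
import Mathlib

section
/- If Q is a finite group, M is a Q-module, and π : Q → M is a surjective 1-cocycle (i.e., π(g₁g₂) = π(g₁)·g₁(π(g₂)) for all g₁,g₂ ∈ Q), then every 1-cocycle π' cohomologous to π (i.e., π'(g) = π(g)·g(m)·m⁻¹ for some fixed m ∈ M and all g) is also surjective. -/
open scoped BigOperators

theorem stmt0 {Q M : Type} [Group Q] [Finite Q] [CommGroup M]
    (ρ : Q → M → M)
    (hρhom : ∀ g a b, ρ g (a * b) = ρ g a * ρ g b)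
    (hρ1 : ∀ a, ρ 1 a = a)
    (hρmul : ∀ g₁ g₂ a, ρ (g₁ * g₂) a = ρ g₁ (ρ g₂ a))
    (π π' : Q → M)
    (hπ : ∀ g₁ g₂, π (g₁ * g₂) = π g₁ * ρ g₁ (π g₂))
    (hπ' : ∀ g₁ g₂, π' (g₁ * g₂) = π' g₁ * ρ g₁ (π' g₂))
    (hsurj : Function.Surjective π)
    (m : M) (hcob : ∀ g, π' g = π g * ρ g m * m⁻¹) :
    Function.Surjective π' := by
  intro y
  obtain ⟨g₁, hg₁⟩ := hsurj m
  obtain ⟨g₂, hg₂⟩ := hsurj (m * y)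
  refine ⟨g₂ * g₁⁻¹, ?_⟩
  have key : π (g₂ * g₁⁻¹) * ρ (g₂ * g₁⁻¹) m = π g₂ := by
    rw [← hg₁, ← hπ, inv_mul_cancel_right]
  rw [hcob, key, hg₂, mul_comm m y, mul_inv_cancel_right]
end

section
/- Let 1 → A → G → Q → 1 be an extension of finite groups with A abelian, with transversal {ḡ}_{g∈Q} and factor set β ∈ Z²(Q,A) defined by ḡ₁ḡ₂ = β(g₁,g₂)·(g₁g₂)̄. For a 1-cocycle π ∈ Z¹(Q,Â), where Â = Hom(A,ℂ*) with diagonal Q-action, define the 2-cochain φ_π on G by φ_π(a₁ḡ₁, a₂ḡ₂) := ⟨π(g₁), g₁(a₂)⟩⁻¹. Then the coboundary of φ_π satisfies δ²(φ_π)(a₁ḡ₁, a₂ḡ₂, a₃ḡ₃) = ⟨π(g₁), g₁(β(g₂,g₃))⟩⁻¹ for all aᵢ ∈ A, gᵢ ∈ Q. -/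
open scoped BigOperators

theorem stmt1
    {A G Q : Type} [CommGroup A] [Group G] [Group Q]
    [Fintype A] [Fintype G] [Fintype Q]
    (i : A →* G) (p : G →* Q)
    (hi : Function.Injective i) (hp : Function.Surjective p)
    (hker : ∀ γ : G, p γ = 1 ↔ γ ∈ Set.range i)
    (s : Q → G) (hs : ∀ q, p (s q) = q) (hs1 : s 1 = 1)
    (r : G → A) (hr : ∀ γ : G, γ = i (r γ) * s (p γ))
    (β : Q → Q → A) (hβ : ∀ g₁ g₂, s g₁ * s g₂ = i (β g₁ g₂) * s (g₁ * g₂))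
    (act : Q → A → A) (hact : ∀ g a, i (act g a) = s g * i a * (s g)⁻¹)
    (π : Q → A → ℂˣ)
    (hπhom : ∀ g a b, π g (a * b) = π g a * π g b)
    (hπcoc : ∀ g₁ g₂ a, π (g₁ * g₂) a = π g₁ a * π g₂ (act g₁⁻¹ a))
    (Φ : G → G → ℂˣ)
    (hΦ : ∀ γ₁ γ₂, Φ γ₁ γ₂ = (π (p γ₁) (act (p γ₁) (r γ₂)))⁻¹)
 :
    ∀ γ₁ γ₂ γ₃ : G,
      Φ γ₂ γ₃ * (Φ (γ₁ * γ₂) γ₃)⁻¹ * Φ γ₁ (γ₂ * γ₃) * (Φ γ₁ γ₂)⁻¹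
        = (π (p γ₁) (act (p γ₁) (β (p γ₂) (p γ₃))))⁻¹ := by
  have comm : ∀ x y : A, i x * i y = i y * i x := fun x y => by
    rw [← map_mul, ← map_mul, mul_comm]
  have act_mul : ∀ g a b, act g (a * b) = act g a * act g b := by
    intro g a b
    apply hi
    simp only [map_mul, hact]
    group
  have act_act : ∀ g h a, act g (act h a) = act (g * h) a := by
    intro g h a
    apply hi
    have hb : i (β g h) = s g * s h * (s (g * h))⁻¹ := by rw [hβ g h]; group
    have key : i (act g (act h a)) * i (β g h) = i (β g h) * i (act (g * h) a) := by
      simp only [hact]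
      rw [hb]
      group
    rw [comm (act g (act h a)) (β g h)] at key
    exact mul_left_cancel key
  have act_one : ∀ a, act 1 a = a := by
    intro a
    apply hi
    rw [hact, hs1]
    group
  intro γ₁ γ₂ γ₃
  have hp12 : p (γ₁ * γ₂) = p γ₁ * p γ₂ := map_mul p _ _
  have hp23 : p (γ₂ * γ₃) = p γ₂ * p γ₃ := map_mul p _ _
  have r_mul : r (γ₂ * γ₃) = r γ₂ * act (p γ₂) (r γ₃) * β (p γ₂) (p γ₃) := by
    apply hi
    have h1 : i (r (γ₂ * γ₃)) * s (p γ₂ * p γ₃) = γ₂ * γ₃ := by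
      rw [← hp23, ← hr]
    have hsplit : s (p γ₂ * p γ₃) = (i (β (p γ₂) (p γ₃)))⁻¹ * (s (p γ₂) * s (p γ₃)) := by
      rw [hβ]; group
    have h2 : i (r γ₂ * act (p γ₂) (r γ₃) * β (p γ₂) (p γ₃)) * s (p γ₂ * p γ₃)
        = γ₂ * γ₃ := by
      conv_rhs => rw [hr γ₂, hr γ₃]
      rw [map_mul, map_mul, hact, hsplit]
      group
    have := h1.trans h2.symm
    exact mul_right_cancel this
  have key1 : π (p γ₁ * p γ₂) (act (p γ₁ * p γ₂) (r γ₃))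
      = π (p γ₁) (act (p γ₁) (act (p γ₂) (r γ₃))) * π (p γ₂) (act (p γ₂) (r γ₃)) := by
    have e1 : act (p γ₁)⁻¹ (act (p γ₁ * p γ₂) (r γ₃)) = act (p γ₂) (r γ₃) := by
      rw [act_act, inv_mul_cancel_left]
    have e2 : act (p γ₁ * p γ₂) (r γ₃) = act (p γ₁) (act (p γ₂) (r γ₃)) :=
      (act_act _ _ _).symm
    rw [hπcoc, e1, e2]
  have key2 : π (p γ₁) (act (p γ₁) (r (γ₂ * γ₃)))
      = π (p γ₁) (act (p γ₁) (r γ₂)) * π (p γ₁) (act (p γ₁) (act (p γ₂) (r γ₃)))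
        * π (p γ₁) (act (p γ₁) (β (p γ₂) (p γ₃))) := by
    rw [r_mul, act_mul, act_mul, hπhom, hπhom]
  rw [hΦ, hΦ, hΦ, hΦ, hp12, key1, key2]
  simp only [mul_inv_rev, inv_inv, ← mul_assoc]
  have cg : ∀ x y z w : ℂˣ, x⁻¹ * y * x * w⁻¹ * y⁻¹ * z⁻¹ * z = w⁻¹ := by
    intro x y z w
    rw [mul_right_comm x⁻¹ y x, mul_right_comm _ w⁻¹ y⁻¹]
    group
  exact cg _ _ _ _
end

section
/- With the setup of the extension 1 → A → G → Q → 1 (A abelian), if π ∈ Z¹(Q,Â) and there exists a 2-cochain ζ_π ∈ C²(Q,ℂ*) with δ²(ζ_π)(g₁,g₂,g₃) = ⟨π(g₁), g₁(β(g₂,g₃))⟩, then c_π := φ_π · ζ̄_π is a 2-cocycle in Z²(G,ℂ*), where ζ̄_π is the inflation of ζ_π to G. -/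
open scoped BigOperators

theorem stmt2
    {A G Q : Type} [CommGroup A] [Group G] [Group Q]
    [Fintype A] [Fintype G] [Fintype Q]
    (i : A →* G) (p : G →* Q)
    (hi : Function.Injective i) (hp : Function.Surjective p)
    (hker : ∀ γ : G, p γ = 1 ↔ γ ∈ Set.range i)
    (s : Q → G) (hs : ∀ q, p (s q) = q) (hs1 : s 1 = 1)
    (r : G → A) (hr : ∀ γ : G, γ = i (r γ) * s (p γ))
    (β : Q → Q → A) (hβ : ∀ g₁ g₂, s g₁ * s g₂ = i (β g₁ g₂) * s (g₁ * g₂))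
    (act : Q → A → A) (hact : ∀ g a, i (act g a) = s g * i a * (s g)⁻¹)
    (π : Q → A → ℂˣ)
    (hπhom : ∀ g a b, π g (a * b) = π g a * π g b)
    (hπcoc : ∀ g₁ g₂ a, π (g₁ * g₂) a = π g₁ a * π g₂ (act g₁⁻¹ a))
    (Φ : G → G → ℂˣ)
    (hΦ : ∀ γ₁ γ₂, Φ γ₁ γ₂ = (π (p γ₁) (act (p γ₁) (r γ₂)))⁻¹)
    (ζ : Q → Q → ℂˣ)
    (hζ : ∀ g₁ g₂ g₃, ζ g₂ g₃ * (ζ (g₁ * g₂) g₃)⁻¹ * ζ g₁ (g₂ * g₃) * (ζ g₁ g₂)⁻¹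
      = π g₁ (act g₁ (β g₂ g₃)))
    (cπ : G → G → ℂˣ)
    (hcπ : ∀ γ₁ γ₂, cπ γ₁ γ₂ = Φ γ₁ γ₂ * ζ (p γ₁) (p γ₂))
 :
    ∀ γ₁ γ₂ γ₃ : G, cπ γ₁ γ₂ * cπ (γ₁ * γ₂) γ₃ = cπ γ₂ γ₃ * cπ γ₁ (γ₂ * γ₃) := by
  -- s (q₁ q₂) in terms of s q₁, s q₂, β
  have hsg : ∀ q₁ q₂, s (q₁ * q₂) = (i (β q₁ q₂))⁻¹ * (s q₁ * s q₂) := by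
    intro q₁ q₂
    rw [eq_inv_mul_iff_mul_eq]
    exact (hβ q₁ q₂).symm
  -- act g is a homomorphism
  have acthom : ∀ g a b, act g (a * b) = act g a * act g b := by
    intro g a b
    apply hi
    rw [hact, map_mul, map_mul, hact, hact]
    group
  -- act is an action: act (g₁ g₂) = act g₁ ∘ act g₂
  have actmul : ∀ g₁ g₂ a, act (g₁ * g₂) a = act g₁ (act g₂ a) := by
    intro g₁ g₂ a
    apply hi
    rw [hact, hsg]
    have h1 : (i (β g₁ g₂))⁻¹ * (s g₁ * s g₂) * i a * ((i (β g₁ g₂))⁻¹ * (s g₁ * s g₂))⁻¹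
        = (i (β g₁ g₂))⁻¹ * (s g₁ * (s g₂ * i a * (s g₂)⁻¹) * (s g₁)⁻¹) * i (β g₁ g₂) := by
      group
    rw [h1, ← hact, ← hact, ← map_inv, ← map_mul, ← map_mul]
    apply congrArg i
    rw [mul_comm, mul_inv_cancel_left]
  -- decomposition of r of a product
  have rmul : ∀ γ₂ γ₃ : G, r (γ₂ * γ₃) = r γ₂ * act (p γ₂) (r γ₃) * β (p γ₂) (p γ₃) := by
    intro γ₂ γ₃
    apply hi
    have e1 : i (r (γ₂ * γ₃)) * s (p (γ₂ * γ₃))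
        = i (r γ₂ * act (p γ₂) (r γ₃) * β (p γ₂) (p γ₃)) * s (p (γ₂ * γ₃)) := by
      rw [← hr, map_mul p, map_mul i, map_mul i, hact, hsg]
      conv_lhs => rw [hr γ₂, hr γ₃]
      group
    exact mul_right_cancel e1
  -- cocycle computation for π on a product
  have hA : ∀ γ₁ γ₂ γ₃ : G,
      π (p γ₁ * p γ₂) (act (p γ₁ * p γ₂) (r γ₃))
        = π (p γ₁) (act (p γ₁) (act (p γ₂) (r γ₃))) * π (p γ₂) (act (p γ₂) (r γ₃)) := by
    intro γ₁ γ₂ γ₃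
    rw [hπcoc]
    congr 1
    · rw [actmul]
    · congr 1
      rw [← actmul, inv_mul_cancel_left]
  have hB : ∀ γ₁ γ₂ γ₃ : G,
      π (p γ₁) (act (p γ₁) (r (γ₂ * γ₃)))
        = π (p γ₁) (act (p γ₁) (r γ₂)) * π (p γ₁) (act (p γ₁) (act (p γ₂) (r γ₃)))
            * π (p γ₁) (act (p γ₁) (β (p γ₂) (p γ₃))) := by
    intro γ₁ γ₂ γ₃
    rw [rmul, acthom, acthom, hπhom, hπhom]
  -- the purely multiplicative identity in ℂˣ
  have key : ∀ (a b c d z12 z123 z23 z1 : ℂˣ), z23 * z123⁻¹ * z1 * z12⁻¹ = d →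
      a⁻¹ * z12 * ((b * c)⁻¹ * z123) = c⁻¹ * z23 * ((a * b * d)⁻¹ * z1) := by
    intro a b c d z12 z123 z23 z1 h
    have hv : (z23 : ℂ) * (z123 : ℂ)⁻¹ * z1 * (z12 : ℂ)⁻¹ = d := by
      exact_mod_cast congrArg Units.val h
    have hv' : (z23 : ℂ) * z1 = d * z123 * z12 := by
      field_simp at hv; linear_combination hv
    apply Units.ext
    push_cast
    field_simp
    linear_combination (-1 : ℂ) * hv'
  intro γ₁ γ₂ γ₃
  rw [hcπ, hcπ, hcπ, hcπ, hΦ, hΦ, hΦ, hΦ, map_mul p, map_mul p, hA, hB]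
  exact key _ _ _ _ _ _ _ _ (hζ (p γ₁) (p γ₂) (p γ₃))
end

section
/- If π ∈ B¹(Q,Â) is a 1-coboundary, i.e., π(g) = g(χ)·χ⁻¹ for some character χ ∈ Â, then with the choice ζ_π(g₁,g₂) := ⟨χ, β(g₁,g₂)⟩ the resulting 2-cocycle c_π = φ_π · ζ̄_π is a 2-coboundary on G; explicitly, c_π = δ¹(χ̄⁻¹) where χ̄(aḡ) := χ(a). -/
open scoped BigOperators

theorem stmt4
    {A G Q : Type} [CommGroup A] [Group G] [Group Q]
    [Fintype A] [Fintype G] [Fintype Q]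
    (i : A →* G) (p : G →* Q)
    (hi : Function.Injective i) (hp : Function.Surjective p)
    (hker : ∀ γ : G, p γ = 1 ↔ γ ∈ Set.range i)
    (s : Q → G) (hs : ∀ q, p (s q) = q) (hs1 : s 1 = 1)
    (r : G → A) (hr : ∀ γ : G, γ = i (r γ) * s (p γ))
    (β : Q → Q → A) (hβ : ∀ g₁ g₂, s g₁ * s g₂ = i (β g₁ g₂) * s (g₁ * g₂))
    (act : Q → A → A) (hact : ∀ g a, i (act g a) = s g * i a * (s g)⁻¹)
    (χ : A → ℂˣ) (hχhom : ∀ a b, χ (a * b) = χ a * χ b)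
    (π : Q → A → ℂˣ)
    (hπdef : ∀ g a, π g a = χ (act g⁻¹ a) * (χ a)⁻¹)
    (Φ : G → G → ℂˣ)
    (hΦ : ∀ γ₁ γ₂, Φ γ₁ γ₂ = (π (p γ₁) (act (p γ₁) (r γ₂)))⁻¹)
    (ζ : Q → Q → ℂˣ) (hζdef : ∀ g₁ g₂, ζ g₁ g₂ = χ (β g₁ g₂))
    (cπ : G → G → ℂˣ)
    (hcπ : ∀ γ₁ γ₂, cπ γ₁ γ₂ = Φ γ₁ γ₂ * ζ (p γ₁) (p γ₂)) :
    ∀ γ₁ γ₂ : G, cπ γ₁ γ₂ = (χ (r γ₂))⁻¹ * χ (r (γ₁ * γ₂)) * (χ (r γ₁))⁻¹ := by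
  intro γ₁ γ₂
  -- act g⁻¹ undoes act g
  have hactinv : ∀ (g : Q) (x : A), act g⁻¹ (act g x) = x := by
    intro g x
    apply hi
    have h1 : s g⁻¹ * s g = i (β g⁻¹ g) := by
      have := hβ g⁻¹ g
      simpa [hs1] using this
    rw [hact, hact]
    calc s g⁻¹ * (s g * i x * (s g)⁻¹) * (s g⁻¹)⁻¹
        = (s g⁻¹ * s g) * i x * (s g⁻¹ * s g)⁻¹ := by group
      _ = i (β g⁻¹ g) * i x * (i (β g⁻¹ g))⁻¹ := by rw [h1]
      _ = i (β g⁻¹ g * x * (β g⁻¹ g)⁻¹) := by rw [map_mul, map_mul, map_inv]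
      _ = i x := by congr 1; simp [mul_comm, mul_assoc]
  -- cocycle identity
  have hkey : r γ₁ * act (p γ₁) (r γ₂) * β (p γ₁) (p γ₂) = r (γ₁ * γ₂) := by
    apply hi
    have e1 : γ₁ * γ₂ = i (r (γ₁ * γ₂)) * s (p γ₁ * p γ₂) := by
      have := hr (γ₁ * γ₂); simpa [map_mul] using this
    have e2 : γ₁ * γ₂ =
        i (r γ₁ * act (p γ₁) (r γ₂) * β (p γ₁) (p γ₂)) * s (p γ₁ * p γ₂) := by
      calc γ₁ * γ₂ = (i (r γ₁) * s (p γ₁)) * (i (r γ₂) * s (p γ₂)) := by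
            rw [← hr, ← hr]
        _ = i (r γ₁) * (s (p γ₁) * i (r γ₂) * (s (p γ₁))⁻¹) *
              (s (p γ₁) * s (p γ₂)) := by group
        _ = i (r γ₁) * i (act (p γ₁) (r γ₂)) *
              (i (β (p γ₁) (p γ₂)) * s (p γ₁ * p γ₂)) := by rw [hact, hβ]
        _ = _ := by rw [map_mul, map_mul]; group
    exact mul_right_cancel (e2.symm.trans e1)
  have hπ : π (p γ₁) (act (p γ₁) (r γ₂))
      = χ (r γ₂) * (χ (act (p γ₁) (r γ₂)))⁻¹ := by
    rw [hπdef, hactinv]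
  have hχkey : χ (r (γ₁ * γ₂))
      = χ (r γ₁) * χ (act (p γ₁) (r γ₂)) * χ (β (p γ₁) (p γ₂)) := by
    rw [← hkey, hχhom, hχhom]
  rw [hcπ, hΦ, hζdef, hπ, hχkey]
  simp [mul_inv_rev, mul_comm, mul_left_comm, mul_assoc]
end

section
/- With the same setup, the linear map θ_c : ℂ[G] → ℂ^c[G] defined by σ ↦ (1/|G|) Σ_{γ∈G} [γ,σ⁻¹]_c⁻¹ U_γ is a morphism of G-modules from the left regular representation to the conjugation representation on the twisted group algebra. Moreover θ_c(τ) = τ·θ_c(1) for all τ ∈ G. -/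
open scoped BigOperators

lemma key12 {G : Type} [Group G] (c : G → G → ℂˣ)
    (hcoc : ∀ σ γ τ : G, c σ γ * c (σ * γ) τ = c γ τ * c σ (γ * τ))
    (α : G → G → ℂˣ) (hα : ∀ σ γ : G, α σ γ = c γ σ * (c (γ * σ * γ⁻¹) γ)⁻¹)
    (σ δ γ : G) :
    ((α σ δ : ℂˣ) : ℂ) * ((α (δ*σ*δ⁻¹) γ : ℂˣ) : ℂ) = ((α σ (γ*δ) : ℂˣ) : ℂ) := by
  have h1 := congrArg (Units.val) (hcoc γ δ σ)
  have h2 := congrArg (Units.val) (hcoc γ (δ*σ*δ⁻¹) δ)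
  have h3 := congrArg (Units.val) (hcoc (γ*(δ*σ*δ⁻¹)*γ⁻¹) γ δ)
  have e1 : δ*σ*δ⁻¹*δ = δ*σ := by group
  have e2 : γ*(δ*σ*δ⁻¹)*γ⁻¹*γ = γ*(δ*σ*δ⁻¹) := by group
  have e3 : γ*δ*σ*(γ*δ)⁻¹ = γ*(δ*σ*δ⁻¹)*γ⁻¹ := by group
  rw [e1] at h2
  rw [e2] at h3
  rw [hα, hα, hα, e3]
  simp only [Units.val_mul] at h1 h2 h3
  simp only [Units.val_mul, Units.val_inv_eq_inv_val]
  have n2 : (c (δ*σ*δ⁻¹) δ : ℂ) ≠ 0 := Units.ne_zero _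
  have n4 : (c (γ*(δ*σ*δ⁻¹)*γ⁻¹) γ : ℂ) ≠ 0 := Units.ne_zero _
  have n6 : (c (γ*(δ*σ*δ⁻¹)*γ⁻¹) (γ*δ) : ℂ) ≠ 0 := Units.ne_zero _
  have n7 : (c γ δ : ℂ) ≠ 0 := Units.ne_zero _
  have main : (c γ δ : ℂ) * ((c δ σ : ℂ) * (c γ (δ*σ*δ⁻¹) : ℂ) * (c (γ*(δ*σ*δ⁻¹)*γ⁻¹) (γ*δ) : ℂ)) =
      (c γ δ : ℂ) * ((c (δ*σ*δ⁻¹) δ : ℂ) * (c (γ*(δ*σ*δ⁻¹)*γ⁻¹) γ : ℂ) * (c (γ*δ) σ : ℂ)) := by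
    linear_combination ((c δ σ : ℂ) * (c (γ*(δ*σ*δ⁻¹)*γ⁻¹) γ : ℂ)) * h2
      - ((c δ σ : ℂ) * (c γ (δ*σ*δ⁻¹) : ℂ)) * h3
      - ((c (δ*σ*δ⁻¹) δ : ℂ) * (c (γ*(δ*σ*δ⁻¹)*γ⁻¹) γ : ℂ)) * h1
  have main' := mul_left_cancel₀ n7 main
  set b1 := (c δ σ : ℂ)
  set b2 := (c (δ*σ*δ⁻¹) δ : ℂ)
  set b3 := (c γ (δ*σ*δ⁻¹) : ℂ)
  set b4 := (c (γ*(δ*σ*δ⁻¹)*γ⁻¹) γ : ℂ)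
  set b5 := (c (γ*δ) σ : ℂ)
  set b6 := (c (γ*(δ*σ*δ⁻¹)*γ⁻¹) (γ*δ) : ℂ)
  field_simp
  linear_combination main'

theorem stmt12 {G : Type} [Group G] [Fintype G] [DecidableEq G]
    (c : G → G → ℂˣ)
    (hcoc : ∀ σ γ τ : G, c σ γ * c (σ * γ) τ = c γ τ * c σ (γ * τ))
    (α : G → G → ℂˣ) (hα : ∀ σ γ : G, α σ γ = c γ σ * (c (γ * σ * γ⁻¹) γ)⁻¹)
    (conj : G → (G → ℂ) → (G → ℂ))
    (hconj : ∀ (τ : G) (f : G → ℂ) (δ : G),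
      conj τ f δ = (α (τ⁻¹ * δ * τ) τ : ℂ) * f (τ⁻¹ * δ * τ))
    (reg : G → (G → ℂ) → (G → ℂ))
    (hreg : ∀ (τ : G) (f : G → ℂ) (δ : G), reg τ f δ = f (τ⁻¹ * δ))
    (ψ : (G → ℂ) → (G → ℂ))
    (hψ : ∀ (f : G → ℂ) (δ : G), ψ f δ = ∑ γ : G, f γ * (α γ δ⁻¹ : ℂ))
    (θ : (G → ℂ) → (G → ℂ))
    (hθ : ∀ (f : G → ℂ) (δ : G),
      θ f δ = (Fintype.card G : ℂ)⁻¹ * ∑ σ : G, f σ * ((α δ σ⁻¹ : ℂ))⁻¹)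
    (U : G → (G → ℂ)) (hU : ∀ γ δ : G, U γ δ = if δ = γ then 1 else 0) :
    (∀ (τ : G) (f : G → ℂ), θ (reg τ f) = conj τ (θ f)) ∧
    (∀ τ : G, θ (U τ) = conj τ (θ (U 1))) := by
  have part1 : ∀ (τ : G) (f : G → ℂ), θ (reg τ f) = conj τ (θ f) := by
    intro τ f
    funext δ
    rw [hθ, hconj, hθ]
    set x := τ⁻¹ * δ * τ with hx
    have hsum : ∑ σ : G, reg τ f σ * ((α δ σ⁻¹ : ℂ))⁻¹
        = ∑ σ : G, (α x τ : ℂ) * (f σ * ((α x σ⁻¹ : ℂ))⁻¹) := by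
      refine (Fintype.sum_equiv (Equiv.mulLeft τ)
        (fun σ => (α x τ : ℂ) * (f σ * ((α x σ⁻¹ : ℂ))⁻¹))
        (fun σ => reg τ f σ * ((α δ σ⁻¹ : ℂ))⁻¹) ?_).symm
      intro σ
      have hk := key12 c hcoc α hα x τ (σ⁻¹ * τ⁻¹)
      have ex1 : τ * x * τ⁻¹ = δ := by rw [hx]; group
      have ex2 : σ⁻¹ * τ⁻¹ * τ = σ⁻¹ := by group
      rw [ex1, ex2] at hk
      have hAne : (α x τ : ℂ) ≠ 0 := Units.ne_zero _
      have hBinv : ((α δ (σ⁻¹ * τ⁻¹) : ℂ))⁻¹ = (α x τ : ℂ) * ((α x σ⁻¹ : ℂ))⁻¹ := by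
        rw [← hk, mul_inv, ← mul_assoc, mul_inv_cancel₀ hAne, one_mul]
      have hreg' : reg τ f ((Equiv.mulLeft τ) σ) = f σ := by
        rw [hreg]; simp [Equiv.mulLeft]
      show (α x τ : ℂ) * (f σ * ((α x σ⁻¹ : ℂ))⁻¹)
          = reg τ f ((Equiv.mulLeft τ) σ) * ((α δ ((Equiv.mulLeft τ) σ)⁻¹ : ℂ))⁻¹
      rw [hreg']
      simp only [Equiv.coe_mulLeft, mul_inv_rev]
      rw [hBinv]
      ring
    rw [hsum, ← Finset.mul_sum]
    ring
  refine ⟨part1, fun τ => ?_⟩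
  have hUreg : reg τ (U 1) = U τ := by
    funext δ
    rw [hreg, hU, hU]
    simp [inv_mul_eq_one, eq_comm]
  rw [← hUreg]
  exact part1 τ (U 1)
end

section
/- Let G be a finite group and c ∈ Z²(G,ℂ*) a 2-cocycle such that Σ_{γ∈G} [γ,τ]_c = 0 for every non-trivial τ ∈ G. Then ψ_c : ℂ^c[G] → ℂ[G] is an isomorphism of G-modules with inverse θ_c. Consequently the conjugation G-module ℂ^c[G] is isomorphic to the regular representation ℂ[G]. -/
open scoped BigOperators

theorem stmt13 {G : Type} [Group G] [Fintype G]
    (c : G → G → ℂˣ)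
    (hcoc : ∀ σ γ τ : G, c σ γ * c (σ * γ) τ = c γ τ * c σ (γ * τ))
    (α : G → G → ℂˣ) (hα : ∀ σ γ : G, α σ γ = c γ σ * (c (γ * σ * γ⁻¹) γ)⁻¹)
    (conj : G → (G → ℂ) → (G → ℂ))
    (hconj : ∀ (τ : G) (f : G → ℂ) (δ : G),
      conj τ f δ = (α (τ⁻¹ * δ * τ) τ : ℂ) * f (τ⁻¹ * δ * τ))
    (reg : G → (G → ℂ) → (G → ℂ))
    (hreg : ∀ (τ : G) (f : G → ℂ) (δ : G), reg τ f δ = f (τ⁻¹ * δ))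
    (ψ : (G → ℂ) → (G → ℂ))
    (hψ : ∀ (f : G → ℂ) (δ : G), ψ f δ = ∑ γ : G, f γ * (α γ δ⁻¹ : ℂ))
    (θ : (G → ℂ) → (G → ℂ))
    (hθ : ∀ (f : G → ℂ) (δ : G),
      θ f δ = (Fintype.card G : ℂ)⁻¹ * ∑ σ : G, f σ * ((α δ σ⁻¹ : ℂ))⁻¹)
    (hsum : ∀ τ : G, τ ≠ 1 → ∑ γ : G, ((α γ τ : ℂ)) = 0) :
    (∀ f : G → ℂ, θ (ψ f) = f) ∧ (∀ f : G → ℂ, ψ (θ f) = f) ∧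
    Function.Bijective ψ ∧
    (∀ (τ : G) (f : G → ℂ), ψ (conj τ f) = reg τ (ψ f)) := by
  classical
  have hn : (Fintype.card G : ℂ) ≠ 0 := Nat.cast_ne_zero.2 Fintype.card_ne_zero
  -- key multiplicativity identity
  have key : ∀ σ τ x : G, (α σ (x*τ) : ℂ) = α σ τ * α (τ*σ*τ⁻¹) x := by
    intro σ τ x
    have hd : ∀ a b t : G, (c a b : ℂ) * c (a*b) t = c b t * c a (b*t) := by
      intro a b t; exact_mod_cast congrArg Units.val (hcoc a b t)
    rw [hα σ (x*τ), hα σ τ, hα (τ*σ*τ⁻¹) x]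
    rw [show x*τ*σ*(x*τ)⁻¹ = x*(τ*σ*τ⁻¹)*x⁻¹ by group]
    simp only [Units.val_mul, Units.val_inv_eq_inv_val]
    have e1 := hd x τ σ
    have e2 := hd (x*(τ*σ*τ⁻¹)*x⁻¹) x τ
    have e3 := hd x (τ*σ*τ⁻¹) τ
    rw [show (x*(τ*σ*τ⁻¹)*x⁻¹) * x = x*(τ*σ*τ⁻¹) by group] at e2
    rw [show (τ*σ*τ⁻¹)*τ = τ*σ by group] at e3
    generalize hA : (c (x*τ) σ : ℂ) = A at *
    generalize hF : (c (x*(τ*σ*τ⁻¹)*x⁻¹) (x*τ) : ℂ) = F at *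
    generalize hC : (c τ σ : ℂ) = C at *
    generalize hD : (c (τ*σ*τ⁻¹) τ : ℂ) = D at *
    generalize hE : (c x (τ*σ*τ⁻¹) : ℂ) = E at *
    generalize hFx : (c (x*(τ*σ*τ⁻¹)*x⁻¹) x : ℂ) = Fx at *
    generalize hP : (c x τ : ℂ) = P at *
    generalize hQ : (c x (τ*σ) : ℂ) = Q at *
    generalize hM : (c (x*(τ*σ*τ⁻¹)) τ : ℂ) = M at *
    have hFne : F ≠ 0 := hF ▸ Units.ne_zero _
    have hDne : D ≠ 0 := hD ▸ Units.ne_zero _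
    have hFxne : Fx ≠ 0 := hFx ▸ Units.ne_zero _
    have hPne : P ≠ 0 := hP ▸ Units.ne_zero _
    field_simp
    apply mul_left_cancel₀ hPne
    linear_combination (D * Fx) * e1 + (C * E) * e2 - (C * Fx) * e3
  -- α γ 1 = 1
  have hα1 : ∀ γ : G, (α γ 1 : ℂ) = 1 := by
    intro γ
    have h11 : ∀ t : G, c 1 t = c 1 1 := by
      intro t
      have h := hcoc 1 1 t
      simp only [one_mul] at h
      exact (mul_right_cancel h).symm
    have h12 : ∀ s : G, c s 1 = c 1 1 := by
      intro s
      have h := hcoc s 1 1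
      simp only [mul_one] at h
      exact mul_left_cancel ((mul_comm (c 1 1) (c s 1)) ▸ h)
    have h : α γ 1 = 1 := by
      rw [hα, show (1:G)*γ*1⁻¹ = γ by group, h11 γ, h12 γ]
      simp
    rw [h]; rfl
  -- orthogonality
  have orth : ∀ δ σ : G,
      ∑ γ : G, ((α γ σ⁻¹ : ℂ))⁻¹ * (α γ δ⁻¹ : ℂ)
        = if δ = σ then (Fintype.card G : ℂ) else 0 := by
    intro δ σ
    have hterm : ∀ γ : G, ((α γ σ⁻¹ : ℂ))⁻¹ * (α γ δ⁻¹ : ℂ)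
        = (α (σ⁻¹*γ*σ) (δ⁻¹*σ) : ℂ) := by
      intro γ
      have h := key γ σ⁻¹ (δ⁻¹*σ)
      rw [show δ⁻¹*σ*σ⁻¹ = δ⁻¹ by group] at h
      rw [show σ⁻¹*γ*σ⁻¹⁻¹ = σ⁻¹*γ*σ by group] at h
      rw [h, inv_mul_cancel_left₀ (Units.ne_zero _)]
    rw [Finset.sum_congr rfl fun γ _ => hterm γ]
    have hre : ∑ γ : G, (α (σ⁻¹*γ*σ) (δ⁻¹*σ) : ℂ) = ∑ γ : G, (α γ (δ⁻¹*σ) : ℂ) :=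
      Fintype.sum_equiv ((Equiv.mulLeft σ⁻¹).trans (Equiv.mulRight σ)) _ _ (fun γ => rfl)
    rw [hre]
    by_cases h : δ = σ
    · subst h
      simp [hα1]
    · rw [hsum (δ⁻¹*σ) (fun hh => h (inv_mul_eq_one.mp hh)), if_neg h]
  -- matrices
  set A : Matrix G G ℂ := Matrix.of (fun δ γ => (α γ δ⁻¹ : ℂ)) with hAdef
  set B : Matrix G G ℂ := Matrix.of (fun δ σ => (Fintype.card G : ℂ)⁻¹ * ((α δ σ⁻¹ : ℂ))⁻¹) with hBdef
  have hψA : ∀ f, ψ f = A.mulVec f := by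
    intro f; funext δ
    rw [hψ, Matrix.mulVec]
    simp only [dotProduct, hAdef, Matrix.of_apply]
    exact Finset.sum_congr rfl fun γ _ => mul_comm _ _
  have hθB : ∀ f, θ f = B.mulVec f := by
    intro f; funext δ
    rw [hθ, Matrix.mulVec]
    simp only [dotProduct, hBdef, Matrix.of_apply, Finset.mul_sum]
    exact Finset.sum_congr rfl fun σ _ => by ring
  have hAB : A * B = 1 := by
    ext δ σ
    rw [Matrix.mul_apply]
    simp only [hAdef, hBdef, Matrix.of_apply, Matrix.one_apply]
    have : ∑ γ : G, (α γ δ⁻¹ : ℂ) * ((Fintype.card G : ℂ)⁻¹ * ((α γ σ⁻¹ : ℂ))⁻¹)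
        = (Fintype.card G : ℂ)⁻¹ * ∑ γ : G, ((α γ σ⁻¹ : ℂ))⁻¹ * (α γ δ⁻¹ : ℂ) := by
      rw [Finset.mul_sum]; exact Finset.sum_congr rfl fun γ _ => by ring
    rw [this, orth δ σ]
    by_cases h : δ = σ
    · simp [h, inv_mul_cancel₀ hn]
    · simp [h]
  have hBA : B * A = 1 := mul_eq_one_comm.mp hAB
  have hθψ : ∀ f : G → ℂ, θ (ψ f) = f := by
    intro f
    rw [hψA, hθB, Matrix.mulVec_mulVec, hBA, Matrix.one_mulVec]
  have hψθ : ∀ f : G → ℂ, ψ (θ f) = f := by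
    intro f
    rw [hθB, hψA, Matrix.mulVec_mulVec, hAB, Matrix.one_mulVec]
  refine ⟨hθψ, hψθ, Function.bijective_iff_has_inverse.mpr ⟨θ, hθψ, hψθ⟩, ?_⟩
  intro τ f
  funext δ
  rw [hreg, hψ, hψ]
  calc ∑ γ : G, conj τ f γ * (α γ δ⁻¹ : ℂ)
      = ∑ γ : G, f γ * (α γ ((τ⁻¹*δ)⁻¹) : ℂ) := ?_
    _ = _ := rfl
  refine (Fintype.sum_equiv ((Equiv.mulLeft τ).trans (Equiv.mulRight τ⁻¹)) _ _ ?_).symm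
  intro x
  have hx : ((Equiv.mulLeft τ).trans (Equiv.mulRight τ⁻¹)) x = τ*x*τ⁻¹ := rfl
  rw [hx, hconj]
  rw [show τ⁻¹*(τ*x*τ⁻¹)*τ = x by group]
  rw [show ((τ⁻¹*δ)⁻¹ : G) = δ⁻¹*τ by group]
  rw [key x τ δ⁻¹]
  rw [show τ*x*τ⁻¹ = (τ*x)*τ⁻¹ by group]
  ring
end

section
/- Let 1 → A → G → Q → 1 be an extension of finite groups with A abelian, and let π : Q → Â be a bijective 1-cocycle with [β]∪[π] = 0 in H³(Q,ℂ*). Then the 2-cocycle c_π ∈ Z²(G,ℂ*) satisfies Σ_{γ∈G} [γ,aḡ]_{c_π} = 0 for every non-trivial element aḡ ∈ G; consequently ℂ^{c_π}[G] ≅ ℂ[G] as G-modules and c_π is non-degenerate (the twisted group algebra ℂ^{c_π}[G] is a matrix algebra), so G is a group of central type. -/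
open scoped BigOperators

set_option maxHeartbeats 3200000

theorem stmt14
    {A G Q : Type} [CommGroup A] [Group G] [Group Q]
    [Fintype A] [Fintype G] [Fintype Q]
    (i : A →* G) (p : G →* Q)
    (hi : Function.Injective i) (hp : Function.Surjective p)
    (hker : ∀ γ : G, p γ = 1 ↔ γ ∈ Set.range i)
    (s : Q → G) (hs : ∀ q, p (s q) = q) (hs1 : s 1 = 1)
    (r : G → A) (hr : ∀ γ : G, γ = i (r γ) * s (p γ))
    (β : Q → Q → A) (hβ : ∀ g₁ g₂, s g₁ * s g₂ = i (β g₁ g₂) * s (g₁ * g₂))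
    (act : Q → A → A) (hact : ∀ g a, i (act g a) = s g * i a * (s g)⁻¹)
    (π : Q → A → ℂˣ)
    (hπhom : ∀ g a b, π g (a * b) = π g a * π g b)
    (hπcoc : ∀ g₁ g₂ a, π (g₁ * g₂) a = π g₁ a * π g₂ (act g₁⁻¹ a))
    (Φ : G → G → ℂˣ)
    (hΦ : ∀ γ₁ γ₂, Φ γ₁ γ₂ = (π (p γ₁) (act (p γ₁) (r γ₂)))⁻¹)
    (ζ : Q → Q → ℂˣ)
    (hζ : ∀ g₁ g₂ g₃, ζ g₂ g₃ * (ζ (g₁ * g₂) g₃)⁻¹ * ζ g₁ (g₂ * g₃) * (ζ g₁ g₂)⁻¹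
      = π g₁ (act g₁ (β g₂ g₃)))
    (cπ : G → G → ℂˣ)
    (hcπ : ∀ γ₁ γ₂, cπ γ₁ γ₂ = Φ γ₁ γ₂ * ζ (p γ₁) (p γ₂))
    (hζnorm : ∀ g : Q, ζ 1 g = 1 ∧ ζ g 1 = 1)
    (hπinj : Function.Injective π)
    (hπsurj : ∀ χ : A → ℂˣ, (∀ a b, χ (a * b) = χ a * χ b) → ∃ g : Q, π g = χ)
    (α : G → G → ℂˣ) (hα : ∀ σ γ : G, α σ γ = cπ γ σ * (cπ (γ * σ * γ⁻¹) γ)⁻¹)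
    (conj : G → (G → ℂ) → (G → ℂ))
    (hconj : ∀ (τ : G) (f : G → ℂ) (δ : G),
      conj τ f δ = (α (τ⁻¹ * δ * τ) τ : ℂ) * f (τ⁻¹ * δ * τ))
    (reg : G → (G → ℂ) → (G → ℂ))
    (hreg : ∀ (τ : G) (f : G → ℂ) (δ : G), reg τ f δ = f (τ⁻¹ * δ))
    (ψ : (G → ℂ) → (G → ℂ))
    (hψ : ∀ (f : G → ℂ) (δ : G), ψ f δ = ∑ γ : G, f γ * (α γ δ⁻¹ : ℂ))
    (tm : (G → ℂ) → (G → ℂ) → (G → ℂ))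
    (htm : ∀ (f h : G → ℂ) (δ : G),
      tm f h δ = ∑ σ : G, (cπ σ (σ⁻¹ * δ) : ℂ) * f σ * h (σ⁻¹ * δ)) :
    (∀ τ : G, τ ≠ 1 → ∑ γ : G, ((α γ τ : ℂ)) = 0) ∧
    Function.Bijective ψ ∧
    (∀ (τ : G) (f : G → ℂ), ψ (conj τ f) = reg τ (ψ f)) ∧
    (∃ (n : ℕ) (e : (G → ℂ) ≃ₗ[ℂ] Matrix (Fin n) (Fin n) ℂ),
      ∀ f h : G → ℂ, e (tm f h) = e f * e h) := by
  classical
  -- ### basic structural facts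
  have hpi : ∀ a : A, p (i a) = 1 := fun a => (hker (i a)).mpr ⟨a, rfl⟩
  have hr1 : r 1 = (1 : A) := by
    have h1 := hr 1
    rw [map_one p, hs1, mul_one] at h1
    have h2 : i (r 1) = i 1 := by rw [map_one]; exact h1.symm
    exact hi h2
  have hact1 : ∀ a, act 1 a = a := by
    intro a; apply hi; rw [hact, hs1]; simp
  have hactmul : ∀ g a b, act g (a * b) = act g a * act g b := by
    intro g a b; apply hi; simp only [map_mul, hact]; group
  have hactcomp : ∀ g h a, act g (act h a) = act (g * h) a := by
    intro g h a
    apply hi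
    rw [hact g, hact h]
    calc s g * (s h * i a * (s h)⁻¹) * (s g)⁻¹
        = (s g * s h) * i a * (s g * s h)⁻¹ := by group
      _ = (i (β g h) * s (g*h)) * i a * (i (β g h) * s (g*h))⁻¹ := by rw [hβ]
      _ = i (β g h) * (s (g*h) * i a * (s (g*h))⁻¹) * (i (β g h))⁻¹ := by group
      _ = i (β g h) * i (act (g*h) a) * (i (β g h))⁻¹ := by rw [← hact]
      _ = i (β g h * act (g*h) a * (β g h)⁻¹) := by rw [map_mul, map_mul, map_inv]
      _ = i (act (g*h) a) := by rw [mul_comm (β g h), mul_inv_cancel_right]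
  have hactone : ∀ g, act g 1 = (1 : A) := by
    intro g; apply hi; rw [hact, map_one]; group
  have hactbij : ∀ g, Function.Bijective (act g) := by
    intro g
    constructor
    · intro a b hab
      have h2 := congrArg (act g⁻¹) hab
      rwa [hactcomp, hactcomp, inv_mul_cancel, hact1, hact1] at h2
    · intro b
      exact ⟨act g⁻¹ b, by rw [hactcomp, mul_inv_cancel, hact1]⟩
  have hπ1 : ∀ a, π 1 a = 1 := by
    intro a
    have h2 := hπcoc 1 1 a
    rw [one_mul, inv_one, hact1] at h2
    exact (left_eq_mul.mp h2)
  have hπone : ∀ g, π g 1 = 1 := by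
    intro g
    have h2 := hπhom g 1 1
    rw [one_mul] at h2
    exact (left_eq_mul.mp h2)
  have hπinv : ∀ g a, π g a⁻¹ = (π g a)⁻¹ := by
    intro g a
    have h2 := hπhom g a⁻¹ a
    rw [inv_mul_cancel, hπone] at h2
    exact eq_inv_of_mul_eq_one_left h2.symm
  have hπact : ∀ g a, π g (act g a) = (π g⁻¹ a)⁻¹ := by
    intro g a
    have h2 := hπcoc g⁻¹ g a
    rw [inv_mul_cancel, hπ1, inv_inv] at h2
    exact eq_inv_of_mul_eq_one_right h2.symm
  have hpdec : ∀ (a : A) (g : Q), p (i a * s g) = g := by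
    intro a g; rw [map_mul, hpi, hs, one_mul]
  have hrdec : ∀ (a : A) (g : Q), r (i a * s g) = a := by
    intro a g
    have h1 := hr (i a * s g)
    rw [hpdec] at h1
    exact hi (mul_right_cancel h1.symm)
  have he0 : Function.Bijective (fun x : A × Q => i x.1 * s x.2) := by
    constructor
    · rintro ⟨a, g⟩ ⟨b, h⟩ hx
      simp only at hx
      have hg : g = h := by rw [← hpdec a g, ← hpdec b h, hx]
      have ha : a = b := by rw [← hrdec a g, ← hrdec b h, hx]
      simp [ha, hg]
    · intro γ; exact ⟨(r γ, p γ), (hr γ).symm⟩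
  have hpr : ∀ x y : G, r (x * y) = r x * act (p x) (r y) * β (p x) (p y) := by
    intro x y
    have key : x * y = i (r x * act (p x) (r y) * β (p x) (p y)) * s (p x * p y) := by
      conv_lhs => rw [hr x, hr y]
      rw [map_mul, map_mul]
      calc i (r x) * s (p x) * (i (r y) * s (p y))
          = i (r x) * (s (p x) * i (r y) * (s (p x))⁻¹) * (s (p x) * s (p y)) := by group
        _ = i (r x) * i (act (p x) (r y)) * (i (β (p x) (p y)) * s (p x * p y)) := by
              rw [← hact, hβ]
        _ = _ := by group
    rw [key, hrdec]
  have hβcoc : ∀ g h k, β g h * β (g * h) k = act g (β h k) * β g (h * k) := by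
    intro g h k
    apply hi
    have e1 : (s g * s h) * s k = i (β g h * β (g * h) k) * s (g * h * k) := by
      rw [hβ g h, map_mul]
      calc i (β g h) * s (g * h) * s k = i (β g h) * (s (g * h) * s k) := by group
        _ = i (β g h) * (i (β (g * h) k) * s (g * h * k)) := by rw [hβ]
        _ = _ := by group
    have e2 : s g * (s h * s k) = i (act g (β h k) * β g (h * k)) * s (g * (h * k)) := by
      rw [hβ h k, map_mul]
      calc s g * (i (β h k) * s (h * k))
          = (s g * i (β h k) * (s g)⁻¹) * (s g * s (h * k)) := by group
        _ = i (act g (β h k)) * (i (β g (h * k)) * s (g * (h * k))) := by rw [← hact, hβ]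
        _ = _ := by group
    have e3 : (s g * s h) * s k = s g * (s h * s k) := by group
    have e4 : g * h * k = g * (h * k) := by group
    rw [e1, e2, e4] at e3
    exact mul_right_cancel e3
  -- ### cπ basics
  have hcπ1l : ∀ x : G, cπ 1 x = 1 := by
    intro x
    rw [hcπ, hΦ, map_one p, hπ1, (hζnorm (p x)).1, inv_one, one_mul]
  have hcπ1r : ∀ x : G, cπ x 1 = 1 := by
    intro x
    rw [hcπ, hΦ, hr1, hactone, hπone, map_one p, (hζnorm (p x)).2, inv_one, one_mul]
  have hα1 : ∀ σ : G, α σ 1 = 1 := by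
    intro σ
    rw [hα, hcπ1l]
    have : (1 : G) * σ * (1 : G)⁻¹ = σ := by group
    rw [this, hcπ1r, inv_one, one_mul]
  -- value of cπ in coordinates, in ℂ
  have hcC : ∀ x y : G, (cπ x y : ℂ)
      = ((π (p x) (act (p x) (r y)) : ℂˣ) : ℂ)⁻¹ * ((ζ (p x) (p y) : ℂˣ) : ℂ) := by
    intro x y
    rw [hcπ, hΦ]
    push_cast
    ring
  -- ζ relation in ℂ
  have hζC : ∀ g₁ g₂ g₃ : Q, ((ζ g₂ g₃ : ℂˣ) : ℂ) * ((ζ (g₁ * g₂) g₃ : ℂˣ) : ℂ)⁻¹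
      * ((ζ g₁ (g₂ * g₃) : ℂˣ) : ℂ) * ((ζ g₁ g₂ : ℂˣ) : ℂ)⁻¹
      = ((π g₁ (act g₁ (β g₂ g₃)) : ℂˣ) : ℂ) := by
    intro g₁ g₂ g₃
    have := congrArg Units.val (hζ g₁ g₂ g₃)
    push_cast at this
    exact this
  -- ### the 2-cocycle identity for cπ (in ℂ)
  have hCcocC : ∀ x y z : G,
      (cπ x y : ℂ) * (cπ (x * y) z : ℂ) = (cπ y z : ℂ) * (cπ x (y * z) : ℂ) := by
    intro x y z
    rw [hcC x y, hcC (x*y) z, hcC y z, hcC x (y*z), map_mul p x y, map_mul p y z, hpr y z,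
      show act (p x * p y) (r z) = act (p x) (act (p y) (r z)) from (hactcomp _ _ _).symm]
    have E1 : ((π (p x * p y) (act (p x) (act (p y) (r z))) : ℂˣ) : ℂ)
        = ((π (p x) (act (p x) (act (p y) (r z))) : ℂˣ) : ℂ)
          * ((π (p y) (act (p y) (r z)) : ℂˣ) : ℂ) := by
      have h' := hπcoc (p x) (p y) (act (p x) (act (p y) (r z)))
      rw [show act (p x)⁻¹ (act (p x) (act (p y) (r z))) = act (p y) (r z) by
            rw [hactcomp, inv_mul_cancel, hact1]] at h'
      exact_mod_cast congrArg Units.val h'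
    have E2 : ((π (p x) (act (p x) (r y * act (p y) (r z) * β (p y) (p z))) : ℂˣ) : ℂ)
        = ((π (p x) (act (p x) (r y)) : ℂˣ) : ℂ)
          * ((π (p x) (act (p x) (act (p y) (r z))) : ℂˣ) : ℂ)
          * ((π (p x) (act (p x) (β (p y) (p z))) : ℂˣ) : ℂ) := by
      have h' : π (p x) (act (p x) (r y * act (p y) (r z) * β (p y) (p z)))
          = π (p x) (act (p x) (r y)) * π (p x) (act (p x) (act (p y) (r z)))
            * π (p x) (act (p x) (β (p y) (p z))) := by
        rw [hactmul, hactmul, hπhom, hπhom]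
      exact_mod_cast congrArg Units.val h'
    have E3 := hζC (p x) (p y) (p z)
    rw [E1, E2, ← E3]
    have n1 : ((π (p x) (act (p x) (r y)) : ℂˣ) : ℂ) ≠ 0 := Units.ne_zero _
    have n2 : ((π (p x) (act (p x) (act (p y) (r z))) : ℂˣ) : ℂ) ≠ 0 := Units.ne_zero _
    have n3 : ((π (p y) (act (p y) (r z)) : ℂˣ) : ℂ) ≠ 0 := Units.ne_zero _
    have n4 : ((ζ (p x) (p y) : ℂˣ) : ℂ) ≠ 0 := Units.ne_zero _
    have n5 : ((ζ (p x * p y) (p z) : ℂˣ) : ℂ) ≠ 0 := Units.ne_zero _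
    have n6 : ((ζ (p y) (p z) : ℂˣ) : ℂ) ≠ 0 := Units.ne_zero _
    have n7 : ((ζ (p x) (p y * p z) : ℂˣ) : ℂ) ≠ 0 := Units.ne_zero _
    field_simp
  -- ### conjugation identity for α (in ℂ)
  have hαC : ∀ g t : G, (α g t : ℂ) = (cπ t g : ℂ) * ((cπ (t * g * t⁻¹) t : ℂ))⁻¹ := by
    intro g t
    rw [hα]
    push_cast
    ring
  have hαmulC : ∀ g σ τ : G,
      (α g (σ * τ) : ℂ) = (α g τ : ℂ) * (α (τ * g * τ⁻¹) σ : ℂ) := by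
    intro g σ τ
    have h1 := hCcocC σ τ g
    have h2 := hCcocC σ (τ * g * τ⁻¹) τ
    have h3 := hCcocC (σ * (τ * g * τ⁻¹) * σ⁻¹) σ τ
    rw [show (τ * g * τ⁻¹) * τ = τ * g by group] at h2
    rw [show (σ * (τ * g * τ⁻¹) * σ⁻¹) * σ = σ * (τ * g * τ⁻¹) by group] at h3
    rw [hαC, hαC, hαC,
      show σ * τ * g * (σ * τ)⁻¹ = σ * (τ * g * τ⁻¹) * σ⁻¹ by group]
    set x1 := (cπ σ τ : ℂ) with hx1
    set x2 := (cπ (σ * τ) g : ℂ) with hx2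
    set x3 := (cπ τ g : ℂ) with hx3
    set x4 := (cπ σ (τ * g) : ℂ) with hx4
    set x5 := (cπ σ (τ * g * τ⁻¹) : ℂ) with hx5
    set x6 := (cπ (σ * (τ * g * τ⁻¹)) τ : ℂ) with hx6
    set x7 := (cπ (τ * g * τ⁻¹) τ : ℂ) with hx7
    set x8 := (cπ (σ * (τ * g * τ⁻¹) * σ⁻¹) σ : ℂ) with hx8
    set x9 := (cπ (σ * (τ * g * τ⁻¹) * σ⁻¹) (σ * τ) : ℂ) with hx9
    have n1 : x1 ≠ 0 := by rw [hx1]; exact Units.ne_zero _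
    have n7 : x7 ≠ 0 := by rw [hx7]; exact Units.ne_zero _
    have n8 : x8 ≠ 0 := by rw [hx8]; exact Units.ne_zero _
    have n9 : x9 ≠ 0 := by rw [hx9]; exact Units.ne_zero _
    field_simp
    have key : x1 * (x2 * (x7 * x8)) = x1 * (x3 * x5 * x9) := by
      linear_combination (x7*x8) * h1 - (x3*x8) * h2 + (x3*x5) * h3
    exact mul_left_cancel₀ n1 (by linear_combination key)
  -- ### character sum lemmas
  have hL1 : ∀ (χ : A → ℂˣ), (∀ a b, χ (a * b) = χ a * χ b) → (∃ a₀, χ a₀ ≠ 1) →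
      ∑ a : A, ((χ a : ℂˣ) : ℂ) = 0 := by
    rintro χ hom ⟨a₀, ha₀⟩
    have key : ((χ a₀ : ℂˣ) : ℂ) * ∑ a : A, ((χ a : ℂˣ) : ℂ) = ∑ a : A, ((χ a : ℂˣ) : ℂ) := by
      rw [Finset.mul_sum]
      refine Fintype.sum_bijective (fun a => a₀ * a) (Group.mulLeft_bijective a₀) _ _ ?_
      intro a
      have h' := congrArg Units.val (hom a₀ a)
      push_cast at h'
      rw [h']
    have h1 : (((χ a₀ : ℂˣ) : ℂ) - 1) * ∑ a : A, ((χ a : ℂˣ) : ℂ) = 0 := by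
      rw [sub_mul, one_mul, key, sub_self]
    rcases mul_eq_zero.mp h1 with h | h
    · exfalso
      apply ha₀
      apply Units.ext
      rw [sub_eq_zero] at h
      simpa using h
    · exact h
  have hL2 : ∀ x : A, x ≠ 1 → ∑ g : Q, ((π g x : ℂˣ) : ℂ) = 0 := by
    haveI : NeZero ((Monoid.exponent A : ℂ)) :=
      ⟨by exact_mod_cast (Monoid.exponent_ne_zero_of_finite (G := A))⟩
    intro x hx
    obtain ⟨χ₀, hχ₀⟩ := CommGroup.exists_apply_ne_one_of_hasEnoughRootsOfUnity A ℂ (a := x) hx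
    set Pih : Q → (A →* ℂˣ) := fun g => MonoidHom.mk' (π g) (fun a b => hπhom g a b) with hPih
    have hPihbij : Function.Bijective Pih := by
      constructor
      · intro g g' hgg'
        apply hπinj
        funext a
        exact DFunLike.congr_fun hgg' a
      · intro χ
        obtain ⟨g, hg⟩ := hπsurj ⇑χ (fun a b => map_mul χ a b)
        exact ⟨g, MonoidHom.ext fun a => congrFun hg a⟩
    letI : Fintype (A →* ℂˣ) := Fintype.ofBijective Pih hPihbij
    have hre : ∑ g : Q, ((π g x : ℂˣ) : ℂ) = ∑ χ : A →* ℂˣ, ((χ x : ℂˣ) : ℂ) :=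
      Fintype.sum_bijective Pih hPihbij _ _ (fun g => rfl)
    rw [hre]
    have key : ((χ₀ x : ℂˣ) : ℂ) * ∑ χ : A →* ℂˣ, ((χ x : ℂˣ) : ℂ)
        = ∑ χ : A →* ℂˣ, ((χ x : ℂˣ) : ℂ) := by
      rw [Finset.mul_sum]
      refine Fintype.sum_bijective (fun χ => χ₀ * χ) (Group.mulLeft_bijective χ₀) _ _ ?_
      intro χ
      have h' : (χ₀ * χ) x = χ₀ x * χ x := rfl
      rw [h']
      push_cast
      ring
    have h1 : (((χ₀ x : ℂˣ) : ℂ) - 1) * ∑ χ : A →* ℂˣ, ((χ x : ℂˣ) : ℂ) = 0 := by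
      rw [sub_mul, one_mul, key, sub_self]
    rcases mul_eq_zero.mp h1 with h | h
    · exfalso
      apply hχ₀
      apply Units.ext
      rw [sub_eq_zero] at h
      simpa using h
    · exact h
  -- ### Goal 1
  have goal1 : ∀ τ : G, τ ≠ 1 → ∑ γ : G, ((α γ τ : ℂ)) = 0 := by
    intro τ hτ
    have hre : ∑ x : A × Q, ((α (i x.1 * s x.2) τ : ℂ)) = ∑ γ : G, ((α γ τ : ℂ)) :=
      Fintype.sum_bijective _ he0 _ _ (fun x => rfl)
    rw [← hre, Fintype.sum_prod_type]
    have hval : ∀ (a : A) (g : Q), (α (i a * s g) τ : ℂ)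
        = ((π (p τ) (act (p τ) a) : ℂˣ) : ℂ)⁻¹ * ((ζ (p τ) g : ℂˣ) : ℂ)
          * (((π (p τ * g * (p τ)⁻¹) (act (p τ * g * (p τ)⁻¹) (r τ)) : ℂˣ) : ℂ)
          * ((ζ (p τ * g * (p τ)⁻¹) (p τ) : ℂˣ) : ℂ)⁻¹) := by
      intro a g
      rw [hαC, hcC, hcC, hrdec, hpdec,
        show p (τ * (i a * s g) * τ⁻¹) = p τ * g * (p τ)⁻¹ by
          rw [map_mul, map_mul, map_inv, hpdec]]
      rw [mul_inv, inv_inv]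
    by_cases hh : p τ = 1
    · -- τ lies in A
      have hb : τ = i (r τ) := by
        conv_lhs => rw [hr τ]
        rw [hh, hs1, mul_one]
      have hbne : r τ ≠ 1 := by
        intro h'
        exact hτ (by rw [hb, h', map_one])
      have hterm : ∀ (a : A) (g : Q), (α (i a * s g) τ : ℂ)
          = ((π g⁻¹ ((r τ)⁻¹) : ℂˣ) : ℂ) := by
        intro a g
        rw [hval a g, hh, show (1 : Q) * g * (1 : Q)⁻¹ = g by group, hπ1, hπact, hπinv,
          (hζnorm g).1, (hζnorm g).2]
        push_cast
        ring
      have hinner : ∀ a : A, ∑ g : Q, (α (i a * s g) τ : ℂ) = 0 := by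
        intro a
        have : ∑ g : Q, (α (i a * s g) τ : ℂ) = ∑ g : Q, ((π g ((r τ)⁻¹) : ℂˣ) : ℂ) := by
          rw [Fintype.sum_equiv (Equiv.inv Q) _ (fun g => ((π g ((r τ)⁻¹) : ℂˣ) : ℂ))
            (fun g => by rw [hterm a g]; rfl)]
        rw [this]
        exact hL2 _ (inv_ne_one.mpr hbne)
      calc ∑ a : A, ∑ g : Q, (α (i a * s g) τ : ℂ) = ∑ a : A, (0 : ℂ) := by
            exact Finset.sum_congr rfl (fun a _ => hinner a)
        _ = 0 := by simp
    · -- p τ ≠ 1 : factor and kill the A-sum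
      have hXsum : ∑ a : A, ((π (p τ) (act (p τ) a) : ℂˣ) : ℂ)⁻¹ = 0 := by
        have hhom : ∀ a b : A, (π (p τ) (act (p τ) (a * b)))⁻¹
            = (π (p τ) (act (p τ) a))⁻¹ * (π (p τ) (act (p τ) b))⁻¹ := by
          intro a b
          rw [hactmul, hπhom, mul_inv]
        have hnt : ∃ a₀ : A, (π (p τ) (act (p τ) a₀))⁻¹ ≠ 1 := by
          by_contra hcon
          push_neg at hcon
          apply hh
          apply hπinj
          funext b
          obtain ⟨a, ha⟩ := (hactbij (p τ)).2 b
          have := hcon a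
          rw [inv_eq_one] at this
          rw [← ha, this, hπ1]
        have h0 := hL1 (fun a => (π (p τ) (act (p τ) a))⁻¹) hhom hnt
        calc ∑ a : A, ((π (p τ) (act (p τ) a) : ℂˣ) : ℂ)⁻¹
            = ∑ a : A, (((π (p τ) (act (p τ) a))⁻¹ : ℂˣ) : ℂ) := by
              exact Finset.sum_congr rfl (fun a _ => by push_cast; ring)
          _ = 0 := h0
      calc ∑ a : A, ∑ g : Q, (α (i a * s g) τ : ℂ)
          = ∑ a : A, (((π (p τ) (act (p τ) a) : ℂˣ) : ℂ)⁻¹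
            * ∑ g : Q, (((ζ (p τ) g : ℂˣ) : ℂ)
              * (((π (p τ * g * (p τ)⁻¹) (act (p τ * g * (p τ)⁻¹) (r τ)) : ℂˣ) : ℂ)
              * ((ζ (p τ * g * (p τ)⁻¹) (p τ) : ℂˣ) : ℂ)⁻¹))) := by
            refine Finset.sum_congr rfl (fun a _ => ?_)
            rw [Finset.mul_sum]
            refine Finset.sum_congr rfl (fun g _ => ?_)
            rw [hval a g]
            ring
        _ = (∑ a : A, ((π (p τ) (act (p τ) a) : ℂˣ) : ℂ)⁻¹)
            * ∑ g : Q, (((ζ (p τ) g : ℂˣ) : ℂ)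
              * (((π (p τ * g * (p τ)⁻¹) (act (p τ * g * (p τ)⁻¹) (r τ)) : ℂˣ) : ℂ)
              * ((ζ (p τ * g * (p τ)⁻¹) (p τ) : ℂˣ) : ℂ)⁻¹)) := by
            rw [Finset.sum_mul]
        _ = 0 := by rw [hXsum, zero_mul]
  -- ### Goal 3
  have goal3 : ∀ (τ : G) (f : G → ℂ), ψ (conj τ f) = reg τ (ψ f) := by
    intro τ f
    funext δ
    rw [hreg, hψ, hψ]
    have hbij : Function.Bijective (fun g : G => τ * g * τ⁻¹) := by
      constructor
      · intro x y hxy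
        simp only at hxy
        exact mul_left_cancel (mul_right_cancel hxy)
      · intro y
        exact ⟨τ⁻¹ * y * τ, by group⟩
    refine (Fintype.sum_bijective _ hbij
      (fun g => f g * (α g (τ⁻¹ * δ)⁻¹ : ℂ))
      (fun γ => conj τ f γ * (α γ δ⁻¹ : ℂ)) ?_).symm
    intro g
    rw [hconj τ f (τ * g * τ⁻¹), show τ⁻¹ * (τ * g * τ⁻¹) * τ = g by group,
      show (τ⁻¹ * δ)⁻¹ = δ⁻¹ * τ by group, hαmulC g δ⁻¹ τ]
    ring
  -- ### Goal 2
  have goal2 : Function.Bijective ψ := by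
    let Ψ : (G → ℂ) →ₗ[ℂ] (G → ℂ) :=
      { toFun := fun f δ => ∑ γ : G, f γ * (α γ δ⁻¹ : ℂ)
        map_add' := by
          intro f g
          funext δ
          simp [add_mul, Finset.sum_add_distrib]
        map_smul' := by
          intro c f
          funext δ
          simp only [Pi.smul_apply, smul_eq_mul, RingHom.id_apply, Finset.mul_sum]
          exact Finset.sum_congr rfl (fun γ _ => by ring) }
    have hψΨ : ψ = ⇑Ψ := by
      funext f δ
      rw [hψ f δ]
      rfl
    have hG0 : (Fintype.card G : ℂ) ≠ 0 := Nat.cast_ne_zero.mpr Fintype.card_ne_zero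
    have hψone : ∀ δ : G, ψ (fun _ => (1 : ℂ)) δ = if δ = 1 then (Fintype.card G : ℂ) else 0 := by
      intro δ
      rw [hψ]
      by_cases hδ : δ = 1
      · subst hδ
        rw [if_pos rfl]
        have : ∀ γ : G, (fun _ => (1:ℂ)) γ * (α γ (1:G)⁻¹ : ℂ) = 1 := by
          intro γ
          rw [inv_one, hα1]
          simp
        rw [Finset.sum_congr rfl (fun γ _ => this γ)]
        simp
      · rw [if_neg hδ]
        have h0 := goal1 δ⁻¹ (inv_ne_one.mpr hδ)
        calc ∑ γ : G, (fun _ => (1:ℂ)) γ * (α γ δ⁻¹ : ℂ) = ∑ γ : G, (α γ δ⁻¹ : ℂ) := by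
              exact Finset.sum_congr rfl (fun γ _ => one_mul _)
          _ = 0 := h0
    have hsingle : ∀ τ : G, Pi.single τ (1 : ℂ) ∈ LinearMap.range Ψ := by
      intro τ
      refine ⟨(Fintype.card G : ℂ)⁻¹ • conj τ (fun _ => 1), ?_⟩
      have h1 : Ψ (conj τ (fun _ => 1)) = reg τ (ψ (fun _ => 1)) := by
        rw [← congrFun hψΨ (conj τ (fun _ => 1))]
        exact goal3 τ _
      rw [map_smul, h1]
      funext δ
      rw [Pi.smul_apply, hreg τ _ δ, hψone (τ⁻¹ * δ), Pi.single_apply]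
      by_cases hδ : δ = τ
      · rw [if_pos (by rw [hδ]; group), if_pos hδ]
        simp [hG0]
      · rw [if_neg (fun hc => hδ (by
          have := congrArg (fun z => τ * z) hc
          simpa [mul_assoc] using this)), if_neg hδ]
        simp
    have hsurj : Function.Surjective ⇑Ψ := by
      intro v
      have hv : v ∈ LinearMap.range Ψ := by
        have hvsum : v = ∑ τ : G, v τ • (Pi.single τ (1 : ℂ) : G → ℂ) := by
          funext δ
          rw [Finset.sum_apply]
          simp [Pi.single_apply]
        rw [hvsum]
        exact Submodule.sum_mem _ (fun τ _ => Submodule.smul_mem _ _ (hsingle τ))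
      exact hv
    rw [hψΨ]
    exact ⟨(LinearMap.injective_iff_surjective).mpr hsurj, hsurj⟩
  -- ### Goal 4
  have goal4 : (∃ (n : ℕ) (e : (G → ℂ) ≃ₗ[ℂ] Matrix (Fin n) (Fin n) ℂ),
      ∀ f h : G → ℂ, e (tm f h) = e f * e h) := by
    let μ : Q → Q → ℂˣ := fun g q => ζ g q * π (g * q) (β g q)
    have hμC : ∀ g q : Q, ((μ g q : ℂˣ) : ℂ)
        = ((ζ g q : ℂˣ) : ℂ) * ((π (g * q) (β g q) : ℂˣ) : ℂ) := by
      intro g q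
      show ((ζ g q * π (g * q) (β g q) : ℂˣ) : ℂ) = _
      push_cast
      ring
    have hμkey : ∀ g1 g2 q : Q, ((μ g1 (g2 * q) : ℂˣ) : ℂ) * ((μ g2 q : ℂˣ) : ℂ)
        = ((ζ g1 g2 : ℂˣ) : ℂ) * ((π (g1 * (g2 * q)) (β g1 g2) : ℂˣ) : ℂ)
          * ((μ (g1 * g2) q : ℂˣ) : ℂ) := by
      intro g1 g2 q
      have e_b : ((π (g1 * (g2 * q)) (β g1 g2) : ℂˣ) : ℂ)
            * ((π (g1 * (g2 * q)) (β (g1 * g2) q) : ℂˣ) : ℂ)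
          = ((π (g1 * (g2 * q)) (act g1 (β g2 q)) : ℂˣ) : ℂ)
            * ((π (g1 * (g2 * q)) (β g1 (g2 * q)) : ℂˣ) : ℂ) := by
        have h' := congrArg (π (g1 * (g2 * q))) (hβcoc g1 g2 q)
        rw [hπhom, hπhom] at h'
        exact_mod_cast congrArg Units.val h'
      have e_c : ((π (g1 * (g2 * q)) (act g1 (β g2 q)) : ℂˣ) : ℂ)
          = ((π g1 (act g1 (β g2 q)) : ℂˣ) : ℂ) * ((π (g2 * q) (β g2 q) : ℂˣ) : ℂ) := by
        have h' := hπcoc g1 (g2 * q) (act g1 (β g2 q))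
        rw [show act g1⁻¹ (act g1 (β g2 q)) = β g2 q by
          rw [hactcomp, inv_mul_cancel, hact1]] at h'
        exact_mod_cast congrArg Units.val h'
      have e_d := hζC g1 g2 q
      have n3 : ((ζ g1 g2 : ℂˣ) : ℂ) ≠ 0 := Units.ne_zero _
      have n4 : ((ζ (g1 * g2) q : ℂˣ) : ℂ) ≠ 0 := Units.ne_zero _
      have e_d' : ((ζ g2 q : ℂˣ) : ℂ) * ((ζ g1 (g2 * q) : ℂˣ) : ℂ)
          = ((π g1 (act g1 (β g2 q)) : ℂˣ) : ℂ)
            * (((ζ g1 g2 : ℂˣ) : ℂ) * ((ζ (g1 * g2) q : ℂˣ) : ℂ)) := by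
        field_simp at e_d
        linear_combination e_d
      rw [hμC, hμC, hμC, mul_assoc g1 g2 q]
      linear_combination (((π (g1 * (g2 * q)) (β g1 (g2 * q)) : ℂˣ) : ℂ)
          * ((π (g2 * q) (β g2 q) : ℂˣ) : ℂ)) * e_d'
        - (((ζ g1 g2 : ℂˣ) : ℂ) * ((ζ (g1 * g2) q : ℂˣ) : ℂ)) * e_b
        - (((ζ g1 g2 : ℂˣ) : ℂ) * ((ζ (g1 * g2) q : ℂˣ) : ℂ)
          * ((π (g1 * (g2 * q)) (β g1 (g2 * q)) : ℂˣ) : ℂ)) * e_c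
    let ρ : G → Matrix Q Q ℂ := fun γ => Matrix.of (fun q' q =>
      if q' = p γ * q then ((μ (p γ) q : ℂˣ) : ℂ) * ((π (p γ * q) (r γ) : ℂˣ) : ℂ) else 0)
    have hρapp : ∀ (γ : G) (q' q : Q), ρ γ q' q
        = if q' = p γ * q then ((μ (p γ) q : ℂˣ) : ℂ) * ((π (p γ * q) (r γ) : ℂˣ) : ℂ) else 0 :=
      fun γ q' q => rfl
    have hρmul : ∀ γ₁ γ₂ : G, ρ γ₁ * ρ γ₂ = (cπ γ₁ γ₂ : ℂ) • ρ (γ₁ * γ₂) := by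
      intro γ₁ γ₂
      ext q' q
      rw [Matrix.mul_apply, Matrix.smul_apply, smul_eq_mul]
      rw [Finset.sum_eq_single (p γ₂ * q)
        (fun b _ hb => by rw [hρapp γ₂ b q, if_neg hb, mul_zero])
        (fun hmem => absurd (Finset.mem_univ _) hmem)]
      rw [hρapp, hρapp, hρapp, map_mul p]
      by_cases hq : q' = p γ₁ * (p γ₂ * q)
      · rw [if_pos hq, if_pos rfl, if_pos (by rw [hq, mul_assoc])]
        -- scalar identity
        rw [hpr γ₁ γ₂, hcC γ₁ γ₂]
        have e_f : ((π (p γ₁ * (p γ₂ * q)) (act (p γ₁) (r γ₂)) : ℂˣ) : ℂ)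
            = ((π (p γ₁) (act (p γ₁) (r γ₂)) : ℂˣ) : ℂ) * ((π (p γ₂ * q) (r γ₂) : ℂˣ) : ℂ) := by
          have h' := hπcoc (p γ₁) (p γ₂ * q) (act (p γ₁) (r γ₂))
          rw [show act (p γ₁)⁻¹ (act (p γ₁) (r γ₂)) = r γ₂ by
            rw [hactcomp, inv_mul_cancel, hact1]] at h'
          exact_mod_cast congrArg Units.val h'
        have e_g : ((π (p γ₁ * p γ₂ * q) (r γ₁ * act (p γ₁) (r γ₂) * β (p γ₁) (p γ₂)) : ℂˣ) : ℂ)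
            = ((π (p γ₁ * (p γ₂ * q)) (r γ₁) : ℂˣ) : ℂ)
              * ((π (p γ₁ * (p γ₂ * q)) (act (p γ₁) (r γ₂)) : ℂˣ) : ℂ)
              * ((π (p γ₁ * (p γ₂ * q)) (β (p γ₁) (p γ₂)) : ℂˣ) : ℂ) := by
          have h' : π (p γ₁ * p γ₂ * q) (r γ₁ * act (p γ₁) (r γ₂) * β (p γ₁) (p γ₂))
              = π (p γ₁ * (p γ₂ * q)) (r γ₁) * π (p γ₁ * (p γ₂ * q)) (act (p γ₁) (r γ₂))
                * π (p γ₁ * (p γ₂ * q)) (β (p γ₁) (p γ₂)) := by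
            rw [mul_assoc (p γ₁) (p γ₂) q, hπhom, hπhom]
          exact_mod_cast congrArg Units.val h'
        have e_k := hμkey (p γ₁) (p γ₂) q
        have nπ : ((π (p γ₁) (act (p γ₁) (r γ₂)) : ℂˣ) : ℂ) ≠ 0 := Units.ne_zero _
        rw [e_g, e_f]
        field_simp
        linear_combination e_k
      · rw [if_neg hq,
          if_neg (show ¬ q' = p γ₁ * p γ₂ * q by rw [mul_assoc]; exact hq),
          zero_mul, mul_zero]
    let E : (G → ℂ) →ₗ[ℂ] Matrix Q Q ℂ :=
      { toFun := fun f => ∑ γ : G, f γ • ρ γ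
        map_add' := by
          intro f g
          show ∑ γ : G, (f γ + g γ) • ρ γ = _
          rw [← Finset.sum_add_distrib]
          exact Finset.sum_congr rfl (fun γ _ => add_smul _ _ _)
        map_smul' := by
          intro c f
          show ∑ γ : G, (c * f γ) • ρ γ = c • ∑ γ : G, f γ • ρ γ
          rw [Finset.smul_sum]
          exact Finset.sum_congr rfl (fun γ _ => mul_smul _ _ _) }
    have hEapp : ∀ f : G → ℂ, E f = ∑ γ : G, f γ • ρ γ := fun f => rfl
    have hEmul : ∀ f h : G → ℂ, E (tm f h) = E f * E h := by
      intro f h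
      rw [hEapp, hEapp, hEapp]
      calc ∑ δ : G, tm f h δ • ρ δ
          = ∑ δ : G, ∑ γ₁ : G, (((cπ γ₁ (γ₁⁻¹ * δ) : ℂ)) * f γ₁ * h (γ₁⁻¹ * δ)) • ρ δ := by
            refine Finset.sum_congr rfl (fun δ _ => ?_)
            rw [htm, Finset.sum_smul]
        _ = ∑ γ₁ : G, ∑ δ : G, (((cπ γ₁ (γ₁⁻¹ * δ) : ℂ)) * f γ₁ * h (γ₁⁻¹ * δ)) • ρ δ :=
            Finset.sum_comm
        _ = ∑ γ₁ : G, ∑ γ₂ : G, (((cπ γ₁ γ₂ : ℂ)) * f γ₁ * h γ₂) • ρ (γ₁ * γ₂) := by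
            refine Finset.sum_congr rfl (fun γ₁ _ => ?_)
            refine (Fintype.sum_bijective (fun γ₂ => γ₁ * γ₂) (Group.mulLeft_bijective γ₁)
              _ _ ?_).symm
            intro γ₂
            rw [show γ₁⁻¹ * (γ₁ * γ₂) = γ₂ by group]
        _ = ∑ γ₁ : G, ∑ γ₂ : G, (f γ₁ • ρ γ₁) * (h γ₂ • ρ γ₂) := by
            refine Finset.sum_congr rfl (fun γ₁ _ => Finset.sum_congr rfl (fun γ₂ _ => ?_))
            rw [smul_mul_assoc, mul_smul_comm, hρmul, smul_smul, smul_smul]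
            congr 1
            ring
        _ = (∑ γ : G, f γ • ρ γ) * ∑ γ : G, h γ • ρ γ := by
            rw [Finset.sum_mul]
            exact Finset.sum_congr rfl (fun γ₁ _ => by rw [Finset.mul_sum])
    have hQ0 : (Fintype.card Q : ℂ) ≠ 0 := Nat.cast_ne_zero.mpr Fintype.card_ne_zero
    have hA0 : (Fintype.card A : ℂ) ≠ 0 := Nat.cast_ne_zero.mpr Fintype.card_ne_zero
    have hEker : ∀ f : G → ℂ, E f = 0 → f = 0 := by
      intro f hf
      have step1 : ∀ g0 q : Q,
          ∑ a : A, f (i a * s g0) * ((π (g0 * q) a : ℂˣ) : ℂ) = 0 := by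
        intro g0 q
        have h0 : (∑ γ : G, f γ • ρ γ) (g0 * q) q = 0 := by rw [← hEapp, hf]; rfl
        rw [Matrix.sum_apply] at h0
        have h2 : ∑ x : A × Q, f (i x.1 * s x.2) * ρ (i x.1 * s x.2) (g0 * q) q = 0 := by
          rw [Fintype.sum_bijective _ he0 _ (fun γ => f γ * ρ γ (g0 * q) q) (fun x => rfl)]
          rw [← h0]
          exact Finset.sum_congr rfl (fun γ _ => rfl)
        rw [Fintype.sum_prod_type] at h2
        have h2' : ∑ a : A, ∑ g : Q, f (i a * s g) * ρ (i a * s g) (g0 * q) q = 0 := h2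
        have h3 : ∑ a : A, ∑ g : Q, f (i a * s g) *
            (if g = g0 then ((μ g q : ℂˣ) : ℂ) * ((π (g * q) a : ℂˣ) : ℂ) else 0) = 0 := by
          refine Eq.trans (Finset.sum_congr rfl
            (fun a _ => Finset.sum_congr rfl (fun g _ => ?_))) h2'
          rw [hρapp, hpdec, hrdec]
          congr 1
          by_cases hg : g = g0
          · rw [if_pos hg, if_pos (show g0 * q = g * q by rw [hg]), hg]
          · rw [if_neg hg,
              if_neg (show ¬ g0 * q = g * q from fun hc => hg (mul_right_cancel hc).symm)]
        have h4 : ∑ a : A, f (i a * s g0) *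
            (((μ g0 q : ℂˣ) : ℂ) * ((π (g0 * q) a : ℂˣ) : ℂ)) = 0 := by
          refine Eq.trans (Finset.sum_congr rfl (fun a _ => ?_)) h3
          symm
          simp only [mul_ite, mul_zero]
          rw [Finset.sum_ite_eq' Finset.univ g0]
          simp
        have h5 : ((μ g0 q : ℂˣ) : ℂ) *
            ∑ a : A, f (i a * s g0) * ((π (g0 * q) a : ℂˣ) : ℂ) = 0 := by
          rw [Finset.mul_sum, ← h4]
          exact Finset.sum_congr rfl (fun a _ => by ring)
        exact (mul_eq_zero.mp h5).resolve_left (Units.ne_zero _)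
      have step2 : ∀ (a0 : A) (g0 : Q), f (i a0 * s g0) = 0 := by
        intro a0 g0
        have h6 : ∑ q : Q, (((π (g0 * q) a0 : ℂˣ) : ℂ))⁻¹
            * (∑ a : A, f (i a * s g0) * ((π (g0 * q) a : ℂˣ) : ℂ)) = 0 :=
          Finset.sum_eq_zero (fun q _ => by rw [step1 g0 q, mul_zero])
        have key : ∀ (a : A) (q : Q), f (i a * s g0) * ((π (g0 * q) (a * a0⁻¹) : ℂˣ) : ℂ)
            = ((π (g0 * q) a0 : ℂˣ) : ℂ)⁻¹
              * (f (i a * s g0) * ((π (g0 * q) a : ℂˣ) : ℂ)) := by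
          intro a q
          have hc : ((π (g0 * q) (a * a0⁻¹) : ℂˣ) : ℂ)
              = ((π (g0 * q) a : ℂˣ) : ℂ) * (((π (g0 * q) a0 : ℂˣ) : ℂ))⁻¹ := by
            have h' := hπhom (g0 * q) a a0⁻¹
            rw [hπinv] at h'
            have h'' := congrArg Units.val h'
            push_cast at h''
            exact h''
          rw [hc]
          ring
        have h7 : ∑ q : Q, ∑ a : A,
            f (i a * s g0) * ((π (g0 * q) (a * a0⁻¹) : ℂˣ) : ℂ) = 0 := by
          refine Eq.trans (Finset.sum_congr rfl (fun q _ => ?_)) h6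
          rw [Finset.mul_sum]
          exact Finset.sum_congr rfl (fun a _ => key a q)
        rw [Finset.sum_comm] at h7
        have hinner : ∀ a : A, (∑ q : Q, ((π (g0 * q) (a * a0⁻¹) : ℂˣ) : ℂ))
            = if a = a0 then (Fintype.card Q : ℂ) else 0 := by
          intro a
          rw [show (∑ q : Q, ((π (g0 * q) (a * a0⁻¹) : ℂˣ) : ℂ))
              = ∑ q : Q, ((π q (a * a0⁻¹) : ℂˣ) : ℂ) from
            Fintype.sum_bijective (fun q => g0 * q) (Group.mulLeft_bijective g0) _ _
              (fun q => rfl)]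
          by_cases ha : a = a0
          · rw [if_pos ha, ha, mul_inv_cancel]
            simp [hπone]
          · rw [if_neg ha]
            exact hL2 _ (fun hc => ha (by rwa [mul_inv_eq_one] at hc))
        have h8 : ∑ a : A, f (i a * s g0) * (if a = a0 then (Fintype.card Q : ℂ) else 0)
            = 0 := by
          refine Eq.trans (Finset.sum_congr rfl (fun a _ => ?_)) h7
          rw [← hinner a, Finset.mul_sum]
        simp only [mul_ite, mul_zero] at h8
        rw [Finset.sum_ite_eq' Finset.univ a0] at h8
        simp only [Finset.mem_univ, if_true] at h8
        exact (mul_eq_zero.mp h8).resolve_right hQ0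
      funext γ
      show f γ = 0
      rw [hr γ]
      exact step2 (r γ) (p γ)
    have hEinj : Function.Injective ⇑E :=
      LinearMap.ker_eq_bot.mp (LinearMap.ker_eq_bot'.mpr hEker)
    have hstd : ∀ q' q : Q, Matrix.single q' q (1 : ℂ) ∈ LinearMap.range E := by
      intro q' q
      refine ⟨fun γ => if p γ = q' * q⁻¹ then
        (Fintype.card A : ℂ)⁻¹ * (((μ (q' * q⁻¹) q : ℂˣ) : ℂ))⁻¹
          * (((π q' (r γ) : ℂˣ) : ℂ))⁻¹ else 0, ?_⟩
      rw [hEapp]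
      ext q₂ q₁
      rw [Matrix.sum_apply]
      have hterm : ∀ γ : G, ((if p γ = q' * q⁻¹ then
          (Fintype.card A : ℂ)⁻¹ * (((μ (q' * q⁻¹) q : ℂˣ) : ℂ))⁻¹
            * (((π q' (r γ) : ℂˣ) : ℂ))⁻¹ else 0) • ρ γ) q₂ q₁
          = (if p γ = q' * q⁻¹ then
              (Fintype.card A : ℂ)⁻¹ * (((μ (q' * q⁻¹) q : ℂˣ) : ℂ))⁻¹
              * (((π q' (r γ) : ℂˣ) : ℂ))⁻¹ * ρ γ q₂ q₁ else 0) := by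
        intro γ
        by_cases hγ : p γ = q' * q⁻¹
        · rw [if_pos hγ, if_pos hγ]
          rfl
        · rw [if_neg hγ, if_neg hγ]
          show (0 : ℂ) • ρ γ q₂ q₁ = 0
          rw [zero_smul]
      rw [Finset.sum_congr rfl (fun γ _ => hterm γ)]
      have h2' : ∑ a : A, ∑ g : Q, (if g = q' * q⁻¹ then
          (Fintype.card A : ℂ)⁻¹ * (((μ (q' * q⁻¹) q : ℂˣ) : ℂ))⁻¹
          * (((π q' a : ℂˣ) : ℂ))⁻¹ * ρ (i a * s g) q₂ q₁ else 0)
          = ∑ γ : G, (if p γ = q' * q⁻¹ then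
              (Fintype.card A : ℂ)⁻¹ * (((μ (q' * q⁻¹) q : ℂˣ) : ℂ))⁻¹
              * (((π q' (r γ) : ℂˣ) : ℂ))⁻¹ * ρ γ q₂ q₁ else 0) := by
        rw [← Fintype.sum_prod_type
          (f := fun x : A × Q => (if x.2 = q' * q⁻¹ then
            (Fintype.card A : ℂ)⁻¹ * (((μ (q' * q⁻¹) q : ℂˣ) : ℂ))⁻¹
            * (((π q' x.1 : ℂˣ) : ℂ))⁻¹ * ρ (i x.1 * s x.2) q₂ q₁ else 0))]
        refine Fintype.sum_bijective _ he0 _ _ (fun x => ?_)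
        rw [hpdec, hrdec]
      rw [← h2']
      -- collapse the g-sum
      have h3 : ∀ a : A, ∑ g : Q, (if g = q' * q⁻¹ then
          (Fintype.card A : ℂ)⁻¹ * (((μ (q' * q⁻¹) q : ℂˣ) : ℂ))⁻¹
          * (((π q' a : ℂˣ) : ℂ))⁻¹ * ρ (i a * s g) q₂ q₁ else 0)
          = (Fintype.card A : ℂ)⁻¹ * (((μ (q' * q⁻¹) q : ℂˣ) : ℂ))⁻¹
            * (((π q' a : ℂˣ) : ℂ))⁻¹ * ρ (i a * s (q' * q⁻¹)) q₂ q₁ := by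
        intro a
        rw [Finset.sum_ite_eq' Finset.univ (q' * q⁻¹)]
        simp
      rw [Finset.sum_congr rfl (fun a _ => h3 a)]
      -- now evaluate
      have hρval : ∀ a : A, ρ (i a * s (q' * q⁻¹)) q₂ q₁
          = if q₂ = q' * q⁻¹ * q₁ then ((μ (q' * q⁻¹) q₁ : ℂˣ) : ℂ)
              * ((π (q' * q⁻¹ * q₁) a : ℂˣ) : ℂ) else 0 := by
        intro a
        rw [hρapp, hpdec, hrdec]
      rw [Finset.sum_congr rfl (fun a _ => by rw [hρval a])]
      by_cases hq2 : q₂ = q' * q⁻¹ * q₁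
      · simp only [if_pos hq2]
        by_cases hq1 : q₁ = q
        · -- diagonal entry : total 1
          have hq2' : q' = q₂ := by rw [hq2, hq1]; group
          rw [hq1, show q' * q⁻¹ * q = q' by group]
          rw [Finset.sum_congr rfl (fun a _ =>
            show (Fintype.card A : ℂ)⁻¹ * (((μ (q' * q⁻¹) q : ℂˣ) : ℂ))⁻¹
              * (((π q' a : ℂˣ) : ℂ))⁻¹
              * (((μ (q' * q⁻¹) q : ℂˣ) : ℂ) * ((π q' a : ℂˣ) : ℂ))
              = (Fintype.card A : ℂ)⁻¹ from by
                have n1 : ((μ (q' * q⁻¹) q : ℂˣ) : ℂ) ≠ 0 := Units.ne_zero _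
                have n2 : ((π q' a : ℂˣ) : ℂ) ≠ 0 := Units.ne_zero _
                field_simp)]
          rw [Finset.sum_const, Matrix.single]
          simp only [Matrix.of_apply]
          rw [if_pos ⟨hq2', trivial⟩, Finset.card_univ, nsmul_eq_mul,
            mul_inv_cancel₀ hA0]
        · -- off entry : character sum vanishes
          have hne : ¬ (q' * q⁻¹ * q₁ = q') := fun hc => hq1 (by
            rw [show q₁ = (q' * q⁻¹)⁻¹ * (q' * q⁻¹ * q₁) by group, hc]; group)
          have hsum : ∑ a : A, ((π (q' * q⁻¹ * q₁) a * (π q' a)⁻¹ : ℂˣ) : ℂ) = 0 := by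
            refine hL1 _ (fun a b => ?_) ?_
            · rw [hπhom, hπhom, mul_inv, mul_mul_mul_comm]
            · by_contra hcon
              push_neg at hcon
              exact hne (hπinj (funext (fun a => mul_inv_eq_one.mp (hcon a))))
          calc ∑ a : A, (Fintype.card A : ℂ)⁻¹ * (((μ (q' * q⁻¹) q : ℂˣ) : ℂ))⁻¹
                * (((π q' a : ℂˣ) : ℂ))⁻¹
                * (((μ (q' * q⁻¹) q₁ : ℂˣ) : ℂ) * ((π (q' * q⁻¹ * q₁) a : ℂˣ) : ℂ))
              = ∑ a : A, ((Fintype.card A : ℂ)⁻¹ * (((μ (q' * q⁻¹) q : ℂˣ) : ℂ))⁻¹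
                * ((μ (q' * q⁻¹) q₁ : ℂˣ) : ℂ))
                * ((π (q' * q⁻¹ * q₁) a * (π q' a)⁻¹ : ℂˣ) : ℂ) := by
                refine Finset.sum_congr rfl (fun a _ => ?_)
                push_cast
                ring
            _ = ((Fintype.card A : ℂ)⁻¹ * (((μ (q' * q⁻¹) q : ℂˣ) : ℂ))⁻¹
                * ((μ (q' * q⁻¹) q₁ : ℂˣ) : ℂ))
                * ∑ a : A, ((π (q' * q⁻¹ * q₁) a * (π q' a)⁻¹ : ℂˣ) : ℂ) :=
                (Finset.mul_sum _ _ _).symm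
            _ = 0 := by rw [hsum, mul_zero]
            _ = Matrix.single q' q (1 : ℂ) q₂ q₁ := by
                rw [Matrix.single]
                simp only [Matrix.of_apply]
                rw [if_neg (fun hc : q' = q₂ ∧ q = q₁ => hq1 hc.2.symm)]
      · simp only [if_neg hq2, mul_zero]
        rw [Finset.sum_const, Matrix.single]
        simp only [Matrix.of_apply]
        rw [if_neg (fun hc : q' = q₂ ∧ q = q₁ => hq2 (by rw [← hc.1, ← hc.2]; group))]
        simp
    have hEsurj : Function.Surjective ⇑E := by
      intro M
      have hM : M ∈ LinearMap.range E := by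
        rw [Matrix.matrix_eq_sum_single M]
        refine Submodule.sum_mem _ (fun q' _ => Submodule.sum_mem _ (fun q _ => ?_))
        have hsm : Matrix.single q' q (M q' q)
            = (M q' q) • Matrix.single q' q (1 : ℂ) := by
          ext a b
          rw [Matrix.smul_apply, Matrix.single, Matrix.single]
          simp only [Matrix.of_apply, smul_eq_mul, mul_ite, mul_one, mul_zero]
        rw [hsm]
        exact Submodule.smul_mem _ _ (hstd q' q)
      exact hM
    refine ⟨Fintype.card Q,
      (LinearEquiv.ofBijective E ⟨hEinj, hEsurj⟩).trans
        (Matrix.reindexAlgEquiv ℂ ℂ (Fintype.equivFin Q)).toLinearEquiv, fun f h => ?_⟩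
    simp only [LinearEquiv.trans_apply, LinearEquiv.ofBijective_apply,
      AlgEquiv.toLinearEquiv_apply]
    change (Matrix.reindexAlgEquiv ℂ ℂ (Fintype.equivFin Q)) (E (tm f h))
      = (Matrix.reindexAlgEquiv ℂ ℂ (Fintype.equivFin Q)) (E f)
        * (Matrix.reindexAlgEquiv ℂ ℂ (Fintype.equivFin Q)) (E h)
    rw [hEmul, map_mul]
  exact ⟨goal1, goal2, goal3, goal4⟩
end

section
/- Let G be a finite group, A ⊴ G a normal subgroup, and c ∈ Z²(G,ℂ*) a non-degenerate 2-cocycle (i.e., ℂ^c[G] is a simple algebra, isomorphic to a matrix algebra over ℂ). Then G acts transitively by conjugation on the set of central primitive idempotents of the subalgebra ℂ^{res c}[A] ⊆ ℂ^c[G]. -/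
open scoped BigOperators
open scoped Classical

noncomputable def tmulC {G : Type} [Group G] [Fintype G] (c : G → G → ℂˣ) (f h : G → ℂ) : G → ℂ :=
  fun δ => ∑ σ : G, (c σ (σ⁻¹ * δ) : ℂ) * f σ * h (σ⁻¹ * δ)

/-- conjugation by `U_τ` in the twisted group algebra. -/
noncomputable def conjC {G : Type} [Group G] (c : G → G → ℂˣ) (τ : G) (f : G → ℂ) : G → ℂ :=
  fun δ => ((c τ (τ⁻¹ * δ * τ) : ℂ) * ((c δ τ : ℂ))⁻¹) * f (τ⁻¹ * δ * τ)

/-- central idempotent of the subalgebra `ℂ^{res c}[A]`. -/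
def IsCentralIdem {G : Type} [Group G] [Fintype G] (c : G → G → ℂˣ) (A : Subgroup G)
    (f : G → ℂ) : Prop :=
  (∀ γ : G, γ ∉ A → f γ = 0) ∧ tmulC c f f = f ∧
  ∀ h : G → ℂ, (∀ γ : G, γ ∉ A → h γ = 0) → tmulC c f h = tmulC c h f

/-- central primitive idempotent of the subalgebra `ℂ^{res c}[A]`. -/
def IsCPI {G : Type} [Group G] [Fintype G] (c : G → G → ℂˣ) (A : Subgroup G)
    (f : G → ℂ) : Prop :=
  IsCentralIdem c A f ∧ f ≠ 0 ∧
  ∀ f₁ f₂ : G → ℂ, IsCentralIdem c A f₁ → IsCentralIdem c A f₂ → f₁ ≠ 0 → f₂ ≠ 0 →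
    tmulC c f₁ f₂ = 0 → f ≠ f₁ + f₂


section Aux
variable {G : Type} [Group G] [Fintype G]

noncomputable def uu (τ : G) : G → ℂ := fun δ => if δ = τ then 1 else 0
noncomputable def oneC (c : G → G → ℂˣ) : G → ℂ :=
  fun δ => if δ = (1 : G) then ((c 1 1 : ℂ))⁻¹ else 0

variable (c : G → G → ℂˣ)

lemma tmulC_add_left (f g h : G → ℂ) : tmulC c (f + g) h = tmulC c f h + tmulC c g h := by
  funext δ; simp [tmulC, mul_add, add_mul, Finset.sum_add_distrib]

lemma tmulC_add_right (f g h : G → ℂ) : tmulC c f (g + h) = tmulC c f g + tmulC c f h := by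
  funext δ; simp [tmulC, mul_add, Finset.sum_add_distrib]

lemma tmulC_smul_left (a : ℂ) (f h : G → ℂ) : tmulC c (a • f) h = a • tmulC c f h := by
  funext δ; simp [tmulC, Finset.mul_sum]; apply Finset.sum_congr rfl; intros; ring

lemma tmulC_smul_right (a : ℂ) (f h : G → ℂ) : tmulC c f (a • h) = a • tmulC c f h := by
  funext δ; simp [tmulC, Finset.mul_sum]; apply Finset.sum_congr rfl; intros; ring

lemma tmulC_zero_left (h : G → ℂ) : tmulC c 0 h = 0 := by
  funext δ; simp [tmulC]

lemma tmulC_zero_right (f : G → ℂ) : tmulC c f 0 = 0 := by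
  funext δ; simp [tmulC]

lemma tmulC_sub_left (f g h : G → ℂ) : tmulC c (f - g) h = tmulC c f h - tmulC c g h := by
  funext δ; simp [tmulC, mul_sub, sub_mul, Finset.sum_sub_distrib]

lemma tmulC_sub_right (f g h : G → ℂ) : tmulC c f (g - h) = tmulC c f g - tmulC c f h := by
  funext δ; simp [tmulC, mul_sub, Finset.sum_sub_distrib]

lemma tmulC_sum_left {ι : Type} (s : Finset ι) (f : ι → G → ℂ) (h : G → ℂ) :
    tmulC c (∑ i ∈ s, f i) h = ∑ i ∈ s, tmulC c (f i) h := by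
  induction s using Finset.induction with
  | empty => simp [tmulC_zero_left]
  | insert _ _ hx ih => rw [Finset.sum_insert hx, Finset.sum_insert hx, tmulC_add_left, ih]

lemma tmulC_sum_right {ι : Type} (s : Finset ι) (f : G → ℂ) (h : ι → G → ℂ) :
    tmulC c f (∑ i ∈ s, h i) = ∑ i ∈ s, tmulC c f (h i) := by
  induction s using Finset.induction with
  | empty => simp [tmulC_zero_right]
  | insert _ _ hx ih => rw [Finset.sum_insert hx, Finset.sum_insert hx, tmulC_add_right, ih]

lemma c_one_right (hcoc : ∀ σ γ τ : G, c σ γ * c (σ * γ) τ = c γ τ * c σ (γ * τ)) (σ : G) :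
    c σ 1 = c 1 1 := by
  have := hcoc σ 1 1; simpa using this

lemma c_one_left (hcoc : ∀ σ γ τ : G, c σ γ * c (σ * γ) τ = c γ τ * c σ (γ * τ)) (τ : G) :
    c 1 τ = c 1 1 := by
  have := hcoc 1 1 τ; simpa using this.symm

lemma c_inv_comm (hcoc : ∀ σ γ τ : G, c σ γ * c (σ * γ) τ = c γ τ * c σ (γ * τ)) (τ : G) :
    c τ τ⁻¹ = c τ⁻¹ τ := by
  have := hcoc τ τ⁻¹ τ
  simp [c_one_right c hcoc, c_one_left c hcoc] at this
  simpa using this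

lemma tmulC_assoc (hcoc : ∀ σ γ τ : G, c σ γ * c (σ * γ) τ = c γ τ * c σ (γ * τ))
    (f g h : G → ℂ) :
    tmulC c (tmulC c f g) h = tmulC c f (tmulC c g h) := by
  funext δ
  simp only [tmulC, Finset.sum_mul, Finset.mul_sum]
  rw [Finset.sum_comm]
  refine Finset.sum_congr rfl fun ρ _ => ?_
  rw [← Equiv.sum_comp (Equiv.mulLeft ρ⁻¹) (fun σ =>
    (c ρ (ρ⁻¹ * δ) : ℂ) * f ρ * ((c σ (σ⁻¹ * (ρ⁻¹ * δ)) : ℂ) * g σ * h (σ⁻¹ * (ρ⁻¹ * δ))))]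
  refine Finset.sum_congr rfl fun σ _ => ?_
  simp only [Equiv.coe_mulLeft]
  have hc := congrArg (Units.val) (hcoc ρ (ρ⁻¹ * σ) (σ⁻¹ * δ))
  push_cast at hc
  have e1 : ρ * (ρ⁻¹ * σ) = σ := by group
  have e2 : (ρ⁻¹ * σ) * (σ⁻¹ * δ) = ρ⁻¹ * δ := by group
  have e3 : (ρ⁻¹ * σ)⁻¹ * (ρ⁻¹ * δ) = σ⁻¹ * δ := by group
  rw [e1, e2] at hc
  rw [e3]
  linear_combination (f ρ * g (ρ⁻¹ * σ) * h (σ⁻¹ * δ)) * hc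

lemma one_tmulC (hcoc : ∀ σ γ τ : G, c σ γ * c (σ * γ) τ = c γ τ * c σ (γ * τ)) (h : G → ℂ) :
    tmulC c (oneC c) h = h := by
  funext δ
  simp only [tmulC, oneC]
  rw [Finset.sum_eq_single (1 : G)]
  · simp only [if_pos rfl, inv_one, one_mul, c_one_left c hcoc, ↓reduceIte]
    field_simp
  · intro b _ hb; simp [hb]
  · simp

lemma tmulC_oneC (hcoc : ∀ σ γ τ : G, c σ γ * c (σ * γ) τ = c γ τ * c σ (γ * τ)) (h : G → ℂ) :
    tmulC c h (oneC c) = h := by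
  funext δ
  simp only [tmulC, oneC]
  rw [Finset.sum_eq_single δ]
  · simp only [inv_mul_cancel, if_pos rfl, c_one_right c hcoc, ↓reduceIte]
    field_simp
  · intro b _ hb
    have : ¬ (b⁻¹ * δ = 1) := by
      intro h'; apply hb; rw [inv_mul_eq_one] at h'; exact h'
    simp [this]
  · simp


noncomputable def vv (c : G → G → ℂˣ) (τ : G) : G → ℂ :=
  fun δ => if δ = τ⁻¹ then ((c τ τ⁻¹ : ℂ))⁻¹ * ((c 1 1 : ℂ))⁻¹ else 0

lemma uu_tmulC (τ : G) (f : G → ℂ) :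
    tmulC c (uu τ) f = fun δ => (c τ (τ⁻¹ * δ) : ℂ) * f (τ⁻¹ * δ) := by
  funext δ
  simp only [tmulC, uu]
  rw [Finset.sum_eq_single τ]
  · simp
  · intro b _ hb; simp [hb]
  · simp

lemma tmulC_uu (τ : G) (f : G → ℂ) :
    tmulC c f (uu τ) = fun δ => (c (δ * τ⁻¹) τ : ℂ) * f (δ * τ⁻¹) := by
  funext δ
  simp only [tmulC, uu]
  rw [Finset.sum_eq_single (δ * τ⁻¹)]
  · have : (δ * τ⁻¹)⁻¹ * δ = τ := by group
    simp [this]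
  · intro b _ hb
    have : ¬ (b⁻¹ * δ = τ) := by
      intro h'; apply hb
      have : δ = b * τ := by rw [← h']; group
      rw [this]; group
    simp [this]
  · simp

lemma tmulC_vv (τ : G) (f : G → ℂ) :
    tmulC c f (vv c τ) = fun δ =>
      ((c τ τ⁻¹ : ℂ))⁻¹ * ((c 1 1 : ℂ))⁻¹ * (c (δ * τ) τ⁻¹ : ℂ) * f (δ * τ) := by
  have hv : vv c τ = (((c τ τ⁻¹ : ℂ))⁻¹ * ((c 1 1 : ℂ))⁻¹) • uu τ⁻¹ := by
    funext δ; by_cases h : δ = τ⁻¹ <;> simp [vv, uu, h]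
  rw [hv, tmulC_smul_right, tmulC_uu]
  funext δ
  simp only [inv_inv, Pi.smul_apply, smul_eq_mul]
  ring

lemma uu_tmulC_uu (σ τ : G) : tmulC c (uu σ) (uu τ) = (c σ τ : ℂ) • uu (σ * τ) := by
  rw [uu_tmulC]
  funext δ
  by_cases h : δ = σ * τ
  · have h2 : σ⁻¹ * δ = τ := by rw [h]; group
    simp [uu, h, h2]
  · have h2 : σ⁻¹ * δ ≠ τ := fun h' => h (by rw [← h']; group)
    simp [uu, h, h2]

variable (hcoc : ∀ σ γ τ : G, c σ γ * c (σ * γ) τ = c γ τ * c σ (γ * τ))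

omit [Fintype G] in
lemma cval (σ γ τ : G) (hcoc : ∀ σ γ τ : G, c σ γ * c (σ * γ) τ = c γ τ * c σ (γ * τ)) :
    (c σ γ : ℂ) * (c (σ * γ) τ : ℂ) = (c γ τ : ℂ) * (c σ (γ * τ) : ℂ) := by
  have := congrArg (Units.val) (hcoc σ γ τ)
  push_cast at this
  exact this

lemma c_ne_zero (σ τ : G) : (c σ τ : ℂ) ≠ 0 := Units.ne_zero _

lemma uu_vv (hcoc : ∀ σ γ τ : G, c σ γ * c (σ * γ) τ = c γ τ * c σ (γ * τ)) (τ : G) :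
    tmulC c (uu τ) (vv c τ) = oneC c := by
  rw [tmulC_vv]
  funext δ
  by_cases h : δ = 1
  · have h2 : δ * τ = τ := by rw [h, one_mul]
    simp only [h2, oneC, h, if_pos rfl, uu, if_pos rfl, mul_one, one_mul, ↓reduceIte]
    field_simp
  · have h2 : δ * τ ≠ τ := by
      intro h'; exact h (by rwa [mul_eq_right] at h')
    simp [oneC, uu, h, h2]

lemma vv_uu (hcoc : ∀ σ γ τ : G, c σ γ * c (σ * γ) τ = c γ τ * c σ (γ * τ)) (τ : G) :
    tmulC c (vv c τ) (uu τ) = oneC c := by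
  have hv : vv c τ = (((c τ τ⁻¹ : ℂ))⁻¹ * ((c 1 1 : ℂ))⁻¹) • uu τ⁻¹ := by
    funext δ; by_cases h : δ = τ⁻¹ <;> simp [vv, uu, h]
  rw [hv, tmulC_smul_left, uu_tmulC_uu]
  funext δ
  have hcc : (c τ⁻¹ τ : ℂ) = (c τ τ⁻¹ : ℂ) := by
    exact_mod_cast congrArg Units.val (c_inv_comm c hcoc τ).symm
  simp only [inv_mul_cancel, Pi.smul_apply, smul_eq_mul, uu, oneC]
  by_cases h : δ = 1
  · simp only [h, if_pos rfl, mul_one, hcc, ↓reduceIte]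
    field_simp
  · simp [h]

lemma conjC_eq (hcoc : ∀ σ γ τ : G, c σ γ * c (σ * γ) τ = c γ τ * c σ (γ * τ)) (τ : G) (f : G → ℂ) :
    conjC c τ f = tmulC c (tmulC c (uu τ) f) (vv c τ) := by
  rw [tmulC_vv, uu_tmulC]
  funext δ
  simp only [conjC]
  have e1 : τ⁻¹ * (δ * τ) = τ⁻¹ * δ * τ := by group
  rw [e1]
  rcases eq_or_ne (f (τ⁻¹ * δ * τ)) 0 with hf | hf
  · simp [hf]
  have key := cval c δ τ τ⁻¹ hcoc
  have e2 : τ * τ⁻¹ = (1 : G) := by group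
  rw [e2] at key
  have h1 : (c δ 1 : ℂ) = (c 1 1 : ℂ) := by
    exact_mod_cast congrArg Units.val (c_one_right c hcoc δ)
  rw [h1] at key
  -- key : c δ τ * c (δ*τ) τ⁻¹ = c τ τ⁻¹ * c 1 1
  have hδτ : (c δ τ : ℂ) ≠ 0 := c_ne_zero c δ τ
  have h2 : (c τ τ⁻¹ : ℂ) ≠ 0 := c_ne_zero c τ τ⁻¹
  have h3 : (c 1 1 : ℂ) ≠ 0 := c_ne_zero c 1 1
  set a : ℂ := (c τ (τ⁻¹ * δ * τ) : ℂ) with ha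
  set b : ℂ := f (τ⁻¹ * δ * τ) with hb
  set p : ℂ := (c δ τ : ℂ) with hp
  set q : ℂ := (c (δ * τ) τ⁻¹ : ℂ) with hq
  set r : ℂ := (c τ τ⁻¹ : ℂ) with hr
  set s : ℂ := (c 1 1 : ℂ) with hs
  field_simp
  linear_combination (-a) * key

lemma conjC_add (τ : G) (f g : G → ℂ) :
    conjC c τ (f + g) = conjC c τ f + conjC c τ g := by
  funext δ; simp [conjC, mul_add]

lemma conjC_sub (τ : G) (f g : G → ℂ) :
    conjC c τ (f - g) = conjC c τ f - conjC c τ g := by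
  funext δ; simp [conjC, mul_sub]

lemma conjC_zero (τ : G) : conjC c τ (0 : G → ℂ) = 0 := by
  funext δ; simp [conjC]

lemma conjC_smul (τ : G) (a : ℂ) (f : G → ℂ) :
    conjC c τ (a • f) = a • conjC c τ f := by
  funext δ; simp [conjC]; ring

lemma conjC_one' (hcoc : ∀ σ γ τ : G, c σ γ * c (σ * γ) τ = c γ τ * c σ (γ * τ)) (f : G → ℂ) : conjC c 1 f = f := by
  funext δ
  have h1 : (c 1 δ : ℂ) = (c 1 1 : ℂ) := by exact_mod_cast congrArg Units.val (c_one_left c hcoc δ)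
  have h2 : (c δ 1 : ℂ) = (c 1 1 : ℂ) := by exact_mod_cast congrArg Units.val (c_one_right c hcoc δ)
  simp only [conjC, inv_one, one_mul, mul_one, h1, h2]
  rw [mul_inv_cancel₀ (c_ne_zero c 1 1), one_mul]

lemma conjC_mul (hcoc : ∀ σ γ τ : G, c σ γ * c (σ * γ) τ = c γ τ * c σ (γ * τ)) (τ : G) (f h : G → ℂ) :
    conjC c τ (tmulC c f h) = tmulC c (conjC c τ f) (conjC c τ h) := by
  simp only [conjC_eq c hcoc]
  rw [tmulC_assoc c hcoc (tmulC c (uu τ) f) (vv c τ) (tmulC c (tmulC c (uu τ) h) (vv c τ)),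
      ← tmulC_assoc c hcoc (vv c τ) (tmulC c (uu τ) h) (vv c τ),
      ← tmulC_assoc c hcoc (vv c τ) (uu τ) h,
      vv_uu c hcoc, one_tmulC c hcoc,
      ← tmulC_assoc c hcoc (tmulC c (uu τ) f) h (vv c τ),
      tmulC_assoc c hcoc (uu τ) f h]

lemma vv_tmulC_vv (hcoc : ∀ σ γ τ : G, c σ γ * c (σ * γ) τ = c γ τ * c σ (γ * τ)) (σ τ : G) :
    tmulC c (vv c σ) (vv c τ) = ((c τ σ : ℂ))⁻¹ • vv c (τ * σ) := by
  -- uniqueness of inverse of (uu τ * uu σ)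
  have ha : tmulC c (tmulC c (uu τ) (uu σ)) (tmulC c (vv c σ) (vv c τ)) = oneC c := by
    rw [tmulC_assoc c hcoc (uu τ) (uu σ), ← tmulC_assoc c hcoc (uu σ) (vv c σ) (vv c τ),
        uu_vv c hcoc, one_tmulC c hcoc, uu_vv c hcoc]
  have hb : tmulC c (((c τ σ : ℂ))⁻¹ • vv c (τ * σ)) (tmulC c (uu τ) (uu σ)) = oneC c := by
    rw [uu_tmulC_uu, tmulC_smul_left, tmulC_smul_right, vv_uu c hcoc, smul_smul,
        inv_mul_cancel₀ (c_ne_zero c τ σ), one_smul]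
  calc tmulC c (vv c σ) (vv c τ)
      = tmulC c (oneC c) (tmulC c (vv c σ) (vv c τ)) := (one_tmulC c hcoc _).symm
    _ = tmulC c (tmulC c (((c τ σ : ℂ))⁻¹ • vv c (τ * σ)) (tmulC c (uu τ) (uu σ)))
          (tmulC c (vv c σ) (vv c τ)) := by rw [hb]
    _ = tmulC c (((c τ σ : ℂ))⁻¹ • vv c (τ * σ))
          (tmulC c (tmulC c (uu τ) (uu σ)) (tmulC c (vv c σ) (vv c τ))) := by
        rw [tmulC_assoc c hcoc]
    _ = ((c τ σ : ℂ))⁻¹ • vv c (τ * σ) := by rw [ha, tmulC_oneC c hcoc]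

lemma conjC_conjC (hcoc : ∀ σ γ τ : G, c σ γ * c (σ * γ) τ = c γ τ * c σ (γ * τ)) (τ σ : G) (f : G → ℂ) :
    conjC c τ (conjC c σ f) = conjC c (τ * σ) f := by
  simp only [conjC_eq c hcoc]
  rw [← tmulC_assoc c hcoc (uu τ) (tmulC c (uu σ) f) (vv c σ),
      ← tmulC_assoc c hcoc (uu τ) (uu σ) f, uu_tmulC_uu,
      tmulC_smul_left, tmulC_smul_left, tmulC_smul_left,
      tmulC_assoc c hcoc (tmulC c (uu (τ * σ)) f) (vv c σ) (vv c τ),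
      vv_tmulC_vv c hcoc σ τ, tmulC_smul_right, smul_smul,
      mul_inv_cancel₀ (c_ne_zero c τ σ), one_smul]

lemma conjC_inv (hcoc : ∀ σ γ τ : G, c σ γ * c (σ * γ) τ = c γ τ * c σ (γ * τ)) (τ : G) (f : G → ℂ) :
    conjC c τ⁻¹ (conjC c τ f) = f := by
  rw [conjC_conjC c hcoc, inv_mul_cancel, conjC_one' c hcoc]

lemma conjC_injective (hcoc : ∀ σ γ τ : G, c σ γ * c (σ * γ) τ = c γ τ * c σ (γ * τ)) (τ : G) :
    Function.Injective (conjC c τ) := by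
  intro f g h
  have := congrArg (conjC c τ⁻¹) h
  rwa [conjC_inv c hcoc, conjC_inv c hcoc] at this

lemma fun_eq_sum_uu (f : G → ℂ) : f = ∑ τ : G, f τ • uu τ := by
  funext δ
  simp [uu, Finset.sum_apply]

lemma uu_comm_of_conj_fixed (hcoc : ∀ σ γ τ : G, c σ γ * c (σ * γ) τ = c γ τ * c σ (γ * τ))
    (E : G → ℂ) (hE : ∀ τ : G, conjC c τ E = E) (τ : G) :
    tmulC c (uu τ) E = tmulC c E (uu τ) := by
  have h1 := hE τ
  rw [conjC_eq c hcoc] at h1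
  have h2 := congrArg (fun x => tmulC c x (uu τ)) h1
  rw [tmulC_assoc c hcoc (tmulC c (uu τ) E) (vv c τ) (uu τ), vv_uu c hcoc,
      tmulC_oneC c hcoc] at h2
  exact h2

lemma central_of_conj_fixed (hcoc : ∀ σ γ τ : G, c σ γ * c (σ * γ) τ = c γ τ * c σ (γ * τ))
    (E : G → ℂ) (hE : ∀ τ : G, conjC c τ E = E) (h : G → ℂ) :
    tmulC c E h = tmulC c h E := by
  conv_lhs => rw [fun_eq_sum_uu h]
  conv_rhs => rw [fun_eq_sum_uu h]
  rw [tmulC_sum_right, tmulC_sum_left]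
  refine Finset.sum_congr rfl fun τ _ => ?_
  rw [tmulC_smul_right, tmulC_smul_left, uu_comm_of_conj_fixed c hcoc E hE τ]

lemma central_eq_oneC (hcoc : ∀ σ γ τ : G, c σ γ * c (σ * γ) τ = c γ τ * c σ (γ * τ))
    {n : ℕ} (φ : (G → ℂ) ≃ₗ[ℂ] Matrix (Fin n) (Fin n) ℂ)
    (hφ : ∀ f h : G → ℂ, φ (tmulC c f h) = φ f * φ h)
    (e : G → ℂ) (hee : tmulC c e e = e)
    (hc : ∀ h : G → ℂ, tmulC c e h = tmulC c h e) (hne : e ≠ 0) :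
    e = oneC c := by
  have hone : φ (oneC c) = 1 := by
    have h1 : ∀ M : Matrix (Fin n) (Fin n) ℂ, φ (oneC c) * M = M := by
      intro M
      have := hφ (oneC c) (φ.symm M)
      rw [one_tmulC c hcoc] at this
      simp only [LinearEquiv.apply_symm_apply] at this
      exact this.symm
    simpa using h1 1
  set E := φ e with hEdef
  have hEE : E * E = E := by rw [← hφ, hee]
  have hcom : ∀ M : Matrix (Fin n) (Fin n) ℂ, Commute (E : Matrix (Fin n) (Fin n) ℂ) M := by
    intro M
    have := hφ e (φ.symm M)
    rw [hc (φ.symm M), hφ] at this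
    simp only [LinearEquiv.apply_symm_apply] at this
    exact (this).symm
  obtain ⟨r, hr⟩ : ∃ r : ℂ, Matrix.scalar (Fin n) r = E := by
    apply Matrix.mem_range_scalar_of_commute_single
    intro i j _
    exact (hcom _).symm
  rcases Nat.eq_zero_or_pos n with hn | hn
  · subst hn
    apply φ.injective
    apply Subsingleton.elim
  · have hsc : E = r • (1 : Matrix (Fin n) (Fin n) ℂ) := by
      rw [← hr]; ext i j; simp [Matrix.scalar, Matrix.smul_apply, Matrix.one_apply,
        Matrix.diagonal_apply]
    have hr2 : r * r = r := by
      have h' := hEE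
      rw [hsc] at h'
      have h'' := congrFun (congrFun (congrArg (fun M => (M : Matrix (Fin n) (Fin n) ℂ)) h') ⟨0, hn⟩) ⟨0, hn⟩
      simpa [Matrix.mul_apply, Matrix.one_apply] using h''
    have : r = 0 ∨ r = 1 := by
      have h' : r * (r - 1) = 0 := by linear_combination hr2
      rcases mul_eq_zero.mp h' with h | h
      · exact Or.inl h
      · exact Or.inr (by linear_combination h)
    rcases this with h | h
    · exfalso; apply hne
      apply φ.injective
      rw [← hEdef] at *
      rw [hsc, h, zero_smul, map_zero]
    · apply φ.injective
      rw [hone, ← hEdef, hsc, h, one_smul]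

variable {A : Subgroup G}

lemma suppIn_tmulC (f h : G → ℂ) (hf : ∀ γ : G, γ ∉ A → f γ = 0)
    (hh : ∀ γ : G, γ ∉ A → h γ = 0) : ∀ γ : G, γ ∉ A → tmulC c f h γ = 0 := by
  intro δ hδ
  simp only [tmulC]
  apply Finset.sum_eq_zero
  intro σ _
  by_cases hσ : σ ∈ A
  · have hm : σ⁻¹ * δ ∉ A := by
      intro hm
      exact hδ (by have := A.mul_mem hσ hm; rwa [mul_inv_cancel_left] at this)
    rw [hh _ hm, mul_zero]
  · rw [hf _ hσ, mul_zero, zero_mul]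

lemma suppIn_conjC (hA : A.Normal) (τ : G) (f : G → ℂ) (hf : ∀ γ : G, γ ∉ A → f γ = 0) :
    ∀ δ : G, δ ∉ A → conjC c τ f δ = 0 := by
  intro δ hδ
  have hm : τ⁻¹ * δ * τ ∉ A := by
    intro hm
    apply hδ
    have := hA.conj_mem _ hm τ
    have e : τ * (τ⁻¹ * δ * τ) * τ⁻¹ = δ := by group
    rwa [e] at this
  simp [conjC, hf _ hm]

lemma isCentralIdem_conjC (hcoc : ∀ σ γ τ : G, c σ γ * c (σ * γ) τ = c γ τ * c σ (γ * τ))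
    (hA : A.Normal) (τ : G) (f : G → ℂ) (hf : IsCentralIdem c A f) :
    IsCentralIdem c A (conjC c τ f) := by
  obtain ⟨hsupp, hid, hcen⟩ := hf
  refine ⟨suppIn_conjC c hA τ f hsupp, ?_, ?_⟩
  · rw [← conjC_mul c hcoc, hid]
  · intro h hh
    have hh' : ∀ γ : G, γ ∉ A → conjC c τ⁻¹ h γ = 0 := suppIn_conjC c hA τ⁻¹ h hh
    have hrec : h = conjC c τ (conjC c τ⁻¹ h) := by
      rw [conjC_conjC c hcoc, mul_inv_cancel, conjC_one' c hcoc]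
    rw [hrec, ← conjC_mul c hcoc, ← conjC_mul c hcoc, hcen _ hh']

lemma conjC_ne_zero (hcoc : ∀ σ γ τ : G, c σ γ * c (σ * γ) τ = c γ τ * c σ (γ * τ))
    (τ : G) (f : G → ℂ) (hf : f ≠ 0) : conjC c τ f ≠ 0 := by
  intro h0
  apply hf
  have := congrArg (conjC c τ⁻¹) h0
  rwa [conjC_inv c hcoc, conjC_zero] at this

lemma isCPI_conjC (hcoc : ∀ σ γ τ : G, c σ γ * c (σ * γ) τ = c γ τ * c σ (γ * τ))
    (hA : A.Normal) (τ : G) (f : G → ℂ) (hf : IsCPI c A f) : IsCPI c A (conjC c τ f) := by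
  obtain ⟨hci, hne, hprim⟩ := hf
  refine ⟨isCentralIdem_conjC c hcoc hA τ f hci, conjC_ne_zero c hcoc τ f hne, ?_⟩
  intro f₁ f₂ h₁ h₂ hn₁ hn₂ hprod heq
  have hinv : ∀ g : G → ℂ, conjC c τ (conjC c τ⁻¹ g) = g := by
    intro g; rw [conjC_conjC c hcoc, mul_inv_cancel, conjC_one' c hcoc]
  refine hprim (conjC c τ⁻¹ f₁) (conjC c τ⁻¹ f₂)
    (isCentralIdem_conjC c hcoc hA τ⁻¹ f₁ h₁) (isCentralIdem_conjC c hcoc hA τ⁻¹ f₂ h₂)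
    (conjC_ne_zero c hcoc τ⁻¹ f₁ hn₁) (conjC_ne_zero c hcoc τ⁻¹ f₂ hn₂)
    (by rw [← conjC_mul c hcoc, hprod, conjC_zero]) ?_
  have := congrArg (conjC c τ⁻¹) heq
  rwa [conjC_inv c hcoc, conjC_add] at this

lemma conjC_sum {ι : Type} (τ : G) (s : Finset ι) (g : ι → G → ℂ) :
    conjC c τ (∑ i ∈ s, g i) = ∑ i ∈ s, conjC c τ (g i) := by
  induction s using Finset.induction with
  | empty => simp [conjC_zero]
  | insert _ _ hx ih => rw [Finset.sum_insert hx, Finset.sum_insert hx, conjC_add, ih]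

lemma cpi_eq (hcoc : ∀ σ γ τ : G, c σ γ * c (σ * γ) τ = c γ τ * c σ (γ * τ))
    (f p : G → ℂ) (hf : IsCPI c A f) (hp : IsCentralIdem c A p) (hne : p ≠ 0)
    (hfp : tmulC c f p = p) : f = p := by
  obtain ⟨⟨hsupp, hid, hcen⟩, hfne, hprim⟩ := hf
  obtain ⟨hpsupp, hpid, hpcen⟩ := hp
  have hpf : tmulC c p f = p := by rw [hpcen f hsupp, hfp]
  by_cases hq : f - p = 0
  · exact sub_eq_zero.mp hq
  · exfalso
    have hqci : IsCentralIdem c A (f - p) := by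
      refine ⟨?_, ?_, ?_⟩
      · intro γ hγ; simp [hsupp γ hγ, hpsupp γ hγ]
      · rw [tmulC_sub_left, tmulC_sub_right, tmulC_sub_right, hid, hfp, hpf, hpid]
        abel
      · intro h hh
        rw [tmulC_sub_left, tmulC_sub_right, hcen h hh, hpcen h hh]
    have hpq : tmulC c p (f - p) = 0 := by
      rw [tmulC_sub_right, hpf, hpid, sub_self]
    exact hprim p (f - p) ⟨hpsupp, hpid, hpcen⟩ hqci hne hq hpq (by abel)

lemma cpi_prod_eq (hcoc : ∀ σ γ τ : G, c σ γ * c (σ * γ) τ = c γ τ * c σ (γ * τ))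
    (f g : G → ℂ) (hf : IsCPI c A f) (hg : IsCPI c A g) (hne : tmulC c f g ≠ 0) :
    f = g := by
  obtain ⟨⟨hfs, hfi, hfc⟩, hf0, _⟩ := id hf
  obtain ⟨⟨hgs, hgi, hgc⟩, hg0, _⟩ := id hg
  have hcomm : tmulC c f g = tmulC c g f := hfc g hgs
  have hpci : IsCentralIdem c A (tmulC c f g) := by
    refine ⟨suppIn_tmulC c f g hfs hgs, ?_, ?_⟩
    · rw [tmulC_assoc c hcoc f g (tmulC c f g), ← tmulC_assoc c hcoc g f g, ← hcomm,
          tmulC_assoc c hcoc f g g, hgi, ← tmulC_assoc c hcoc f f g, hfi]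
    · intro h hh
      rw [tmulC_assoc c hcoc f g h, hgc h hh, ← tmulC_assoc c hcoc f h g, hfc h hh,
          tmulC_assoc c hcoc h f g]
  have h1 : f = tmulC c f g :=
    cpi_eq c hcoc f (tmulC c f g) hf hpci hne
      (by rw [← tmulC_assoc c hcoc f f g, hfi])
  have h2 : g = tmulC c f g :=
    cpi_eq c hcoc g (tmulC c f g) hg hpci hne
      (by rw [← tmulC_assoc c hcoc g f g, ← hcomm, tmulC_assoc c hcoc f g g, hgi])
  exact h1.trans h2.symm

end Aux

theorem stmt16 {G : Type} [Group G] [Fintype G]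
    (A : Subgroup G) (hA : A.Normal)
    (c : G → G → ℂˣ)
    (hcoc : ∀ σ γ τ : G, c σ γ * c (σ * γ) τ = c γ τ * c σ (γ * τ))
    (hnd : ∃ (n : ℕ) (e : (G → ℂ) ≃ₗ[ℂ] Matrix (Fin n) (Fin n) ℂ),
      ∀ f h : G → ℂ, e (tmulC c f h) = e f * e h) :
    ∀ f f' : G → ℂ, IsCPI c A f → IsCPI c A f' → ∃ γ : G, conjC c γ f = f' := by
  intro f f' hf hf'
  classical
  set S : Finset (G → ℂ) := Finset.image (fun γ : G => conjC c γ f) Finset.univ with hS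
  have hmem : ∀ g ∈ S, ∃ γ : G, conjC c γ f = g := by
    intro g hg
    obtain ⟨γ, _, hγ⟩ := Finset.mem_image.mp hg
    exact ⟨γ, hγ⟩
  have hcpiS : ∀ g ∈ S, IsCPI c A g := by
    intro g hg
    obtain ⟨γ, rfl⟩ := hmem g hg
    exact isCPI_conjC c hcoc hA γ f hf
  have hfS : f ∈ S :=
    Finset.mem_image.mpr ⟨1, Finset.mem_univ 1, conjC_one' c hcoc f⟩
  have horth : ∀ g ∈ S, ∀ g' ∈ S, g ≠ g' → tmulC c g g' = 0 := by
    intro g hg g' hg' hne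
    by_contra h0
    exact hne (cpi_prod_eq c hcoc g g' (hcpiS g hg) (hcpiS g' hg') h0)
  set E : G → ℂ := ∑ g ∈ S, g with hE
  have hgE : ∀ g ∈ S, tmulC c g E = g := by
    intro g hg
    rw [hE, tmulC_sum_right, Finset.sum_eq_single g]
    · exact (hcpiS g hg).1.2.1
    · intro b hb hbne
      exact horth g hg b hb (Ne.symm hbne)
    · intro h; exact absurd hg h
  have hEE : tmulC c E E = E := by
    conv_lhs => rw [hE, tmulC_sum_left]
    rw [Finset.sum_congr rfl hgE, hE]
  have hconjE : ∀ τ : G, conjC c τ E = E := by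
    intro τ
    rw [hE, conjC_sum]
    have himg : Finset.image (conjC c τ) S = S := by
      apply Finset.eq_of_subset_of_card_le
      · intro x hx
        obtain ⟨g, hg, rfl⟩ := Finset.mem_image.mp hx
        obtain ⟨γ, rfl⟩ := hmem g hg
        rw [conjC_conjC c hcoc]
        exact Finset.mem_image.mpr ⟨τ * γ, Finset.mem_univ _, rfl⟩
      · rw [Finset.card_image_of_injective S (conjC_injective c hcoc τ)]
    conv_rhs => rw [← himg]
    rw [Finset.sum_image (fun x _ y _ h => conjC_injective c hcoc τ h)]
  have hEone : E = oneC c := by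
    obtain ⟨n, φ, hφ⟩ := hnd
    refine central_eq_oneC c hcoc φ hφ E hEE (central_of_conj_fixed c hcoc E hconjE) ?_
    intro h0
    apply hf.2.1
    rw [← hgE f hfS, h0, tmulC_zero_right]
  have hsum : f' = ∑ g ∈ S, tmulC c f' g := by
    conv_lhs => rw [← tmulC_oneC c hcoc f', ← hEone, hE, tmulC_sum_right]
  have hex : ∃ g ∈ S, tmulC c f' g ≠ 0 := by
    by_contra hal
    push_neg at hal
    apply hf'.2.1
    rw [hsum]
    exact Finset.sum_eq_zero hal
  obtain ⟨g, hg, hgne⟩ := hex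
  obtain ⟨γ, rfl⟩ := hmem g hg
  exact ⟨γ, (cpi_prod_eq c hcoc f' (conjC c γ f) hf' (hcpiS _ hg) hgne).symm⟩
end

section
/- Let Q = C₄ × C₂ = ⟨σ⟩×⟨τ⟩ act on A = C₄ × C₂ = ⟨x⟩×⟨y⟩ by σ(x)=xy, τ(x)=x⁻¹, σ(y)=τ(y)=y, and let Â = ⟨x̂⟩×⟨ŷ⟩ with x̂(x)=i, x̂(y)=1, ŷ(x)=1, ŷ(y)=-1. Then the map π : Q → Â defined by π(σᵏτˡ) = x̂^{l-(-1)ˡk}·ŷˡ is a bijective 1-cocycle with respect to the diagonal Q-action on Â. -/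
open scoped BigOperators

private lemma Ine : Complex.I ≠ 0 := Complex.I_ne_zero

private lemma I_zpow_two : Complex.I ^ (2:ℤ) = -1 := by rw [zpow_two, Complex.I_mul_I]

private lemma I_zpow_four : Complex.I ^ (4:ℤ) = 1 := by
  rw [show (4:ℤ) = 2 + 2 by norm_num, zpow_add₀ Ine, I_zpow_two]; ring

private lemma I_zpow_three : Complex.I ^ (3:ℤ) = -Complex.I := by
  rw [show (3:ℤ) = 2 + 1 by norm_num, zpow_add₀ Ine, I_zpow_two, zpow_one, neg_one_mul]

private lemma neg_one_pow_eq (F : ℕ) : ((-1 : ℂ)) ^ F = Complex.I ^ ((2 * F : ℤ)) := by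
  rw [zpow_mul, I_zpow_two, zpow_natCast]

private lemma I_congr {a b : ℤ} (h : (a : ZMod 4) = (b : ZMod 4)) :
    Complex.I ^ a = Complex.I ^ b := by
  obtain ⟨t, ht⟩ := (ZMod.intCast_zmod_eq_zero_iff_dvd (a - b) 4).mp
    (by push_cast; rw [h]; ring)
  rw [show a = b + 4 * t by omega, zpow_add₀ Ine, zpow_mul, I_zpow_four, one_zpow, mul_one]

private lemma I_inj {a b : ℤ} (h : Complex.I ^ a = Complex.I ^ b) :
    (a : ZMod 4) = (b : ZMod 4) := by
  have key : ∀ c : ℤ, Complex.I ^ c = 1 → (c : ZMod 4) = 0 := by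
    intro c hc
    have h4 : (c : ZMod 4) = ((c % 4 : ℤ) : ZMod 4) := (ZMod.intCast_mod c 4).symm
    have hr : c % 4 = 0 ∨ c % 4 = 1 ∨ c % 4 = 2 ∨ c % 4 = 3 := by omega
    have hc' : Complex.I ^ (c % 4) = 1 := by
      rw [← hc]; exact I_congr (by exact_mod_cast h4.symm)
    rcases hr with h0 | h0 | h0 | h0 <;> rw [h0] at hc' <;> rw [h4, h0]
    · rfl
    · exfalso; rw [zpow_one] at hc'
      have := Complex.ext_iff.mp hc'; simp at this
    · exfalso; rw [I_zpow_two] at hc'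
      have := Complex.ext_iff.mp hc'; simp at this; norm_num at this
    · exfalso; rw [I_zpow_three] at hc'
      have := Complex.ext_iff.mp hc'; simp at this
  have h1 : Complex.I ^ (a - b) = 1 := by
    rw [zpow_sub₀ Ine, h, div_self (zpow_ne_zero _ Ine)]
  have h2 := key _ h1
  push_cast at h2
  linear_combination h2

private lemma zpow_pow_comb (a b : ℤ) (m n : ℕ) :
    (Complex.I ^ a) ^ m * (Complex.I ^ b) ^ n = Complex.I ^ (a * m + b * n) := by
  rw [← zpow_natCast (Complex.I ^ a), ← zpow_natCast (Complex.I ^ b), ← zpow_mul, ← zpow_mul,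
    ← zpow_add₀ Ine]

theorem stmt19
    (act : (ZMod 4 × ZMod 2) → (ZMod 4 × ZMod 2) → (ZMod 4 × ZMod 2))
    (hact : ∀ (k : ZMod 4) (l : ZMod 2) (m : ZMod 4) (n : ZMod 2),
      act (k, l) (m, n) = ((-1 : ZMod 4) ^ l.val * m, n + (k.val : ZMod 2) * (m.val : ZMod 2)))
    (π : (ZMod 4 × ZMod 2) → (ZMod 4 × ZMod 2) → ℂ)
    (hπ : ∀ (k : ZMod 4) (l : ZMod 2) (m : ZMod 4) (n : ZMod 2),
      π (k, l) (m, n)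
        = Complex.I ^ (((l.val : ℤ) - (-1 : ℤ) ^ l.val * (k.val : ℤ)) * (m.val : ℤ))
            * (-1 : ℂ) ^ (l.val * n.val)) :
    (∀ g a b, π g (a + b) = π g a * π g b) ∧
    (∀ g₁ g₂ a, π (g₁ + g₂) a = π g₁ a * π g₂ (act (-g₁) a)) ∧
    Function.Injective π ∧
    (∀ χ : ZMod 4 × ZMod 2 → ℂ, χ 0 = 1 → (∀ a b, χ (a + b) = χ a * χ b) →
      ∃ g, π g = χ) := by
  have pi_eq : ∀ (k : ZMod 4) (l : ZMod 2) (m : ZMod 4) (n : ZMod 2),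
      π (k,l) (m,n) = Complex.I ^
        ((((l.val:ℤ) - (-1:ℤ)^l.val * k.val) * m.val) + 2 * ((l.val : ℤ) * n.val)) := by
    intro k l m n
    rw [hπ, neg_one_pow_eq, ← zpow_add₀ Ine]
    congr 1
  refine ⟨?_, ?_, ?_, ?_⟩
  · -- character in second argument
    rintro ⟨k, l⟩ ⟨m, n⟩ ⟨m', n'⟩
    show π _ (m + m', n + n') = _
    rw [pi_eq, pi_eq, pi_eq, ← zpow_add₀ Ine]
    apply I_congr
    clear pi_eq hπ hact π act
    revert k l m n m' n'
    decide
  · -- cocycle identity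
    rintro ⟨k₁, l₁⟩ ⟨k₂, l₂⟩ ⟨m, n⟩
    show π (k₁ + k₂, l₁ + l₂) (m, n) = _ * π _ (act (-k₁, -l₁) (m, n))
    rw [hact, pi_eq, pi_eq, pi_eq, ← zpow_add₀ Ine]
    apply I_congr
    clear pi_eq hπ hact π act
    revert k₁ l₁ k₂ l₂ m n
    decide
  · -- injectivity
    rintro ⟨k, l⟩ ⟨k', l'⟩ h
    have h1 := I_inj (pi_eq k l 1 0 ▸ pi_eq k' l' 1 0 ▸ congrFun h (1, 0))
    have h2 := I_inj (pi_eq k l 0 1 ▸ pi_eq k' l' 0 1 ▸ congrFun h (0, 1))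
    clear h pi_eq hπ hact π act
    revert k l k' l' h1 h2
    decide
  · -- surjectivity onto characters
    intro χ h0 hadd
    have hpow : ∀ (c : ℕ) (a), χ (c • a) = χ a ^ c := by
      intro c a
      induction c with
      | zero => simpa using h0
      | succ c ih => rw [succ_nsmul, hadd, ih, pow_succ]
    have key : ∀ (m : ZMod 4) (n : ZMod 2),
        χ (m, n) = χ (1,0) ^ m.val * χ (0,1) ^ n.val := by
      intro m n
      have hmn : (m, n) = m.val • ((1:ZMod 4), (0:ZMod 2)) + n.val • ((0:ZMod 4), (1:ZMod 2)) := by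
        have : (m.val • ((1:ZMod 4), (0:ZMod 2)) + n.val • ((0:ZMod 4), (1:ZMod 2)))
            = (m.val • (1:ZMod 4) + n.val • (0:ZMod 4),
               m.val • (0:ZMod 2) + n.val • (1:ZMod 2)) := rfl
        rw [this]
        simp [nsmul_eq_mul, ZMod.natCast_val, ZMod.cast_id]
      rw [hmn, hadd, hpow, hpow]
    have hu4 : χ (1,0) ^ 4 = 1 := by
      have h4 := hpow 4 ((1:ZMod 4), (0:ZMod 2))
      rw [show (4 • (((1:ZMod 4)), ((0:ZMod 2)))) = (0 : ZMod 4 × ZMod 2) from by decide,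
        h0] at h4
      exact h4.symm
    have hv2 : χ (0,1) ^ 2 = 1 := by
      have h2 := hpow 2 ((0:ZMod 4), (1:ZMod 2))
      rw [show (2 • (((0:ZMod 4)), ((1:ZMod 2)))) = (0 : ZMod 4 × ZMod 2) from by decide,
        h0] at h2
      exact h2.symm
    have main : ∀ (a b : ℤ) (k : ZMod 4) (l : ZMod 2),
        (∀ (m : ZMod 4) (n : ZMod 2),
          (((((l.val:ℤ) - (-1:ℤ)^l.val * k.val) * m.val) + 2 * ((l.val:ℤ) * n.val) : ℤ) : ZMod 4)
            = ((a * m.val + b * n.val : ℤ) : ZMod 4)) →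
        χ (1,0) = Complex.I ^ a → χ (0,1) = Complex.I ^ b → π (k, l) = χ := by
      intro a b k l hcong hu hv
      funext p
      obtain ⟨m, n⟩ := p
      rw [pi_eq, key m n, hu, hv, zpow_pow_comb]
      exact I_congr (hcong m n)
    have hufac : (χ (1,0) - 1) * (χ (1,0) + 1) * (χ (1,0) - Complex.I) * (χ (1,0) + Complex.I)
        = 0 := by
      linear_combination hu4 + (1 - χ (1,0)^2) * Complex.I_sq
    have hvfac : (χ (0,1) - 1) * (χ (0,1) + 1) = 0 := by linear_combination hv2
    have hv' : χ (0,1) = Complex.I ^ (0:ℤ) ∨ χ (0,1) = Complex.I ^ (2:ℤ) := by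
      rcases mul_eq_zero.mp hvfac with h | h
      · left; rw [zpow_zero, ← sub_eq_zero]; exact h
      · right; rw [I_zpow_two, ← sub_eq_zero]; linear_combination h
    have hu' : χ (1,0) = Complex.I ^ (0:ℤ) ∨ χ (1,0) = Complex.I ^ (1:ℤ) ∨
        χ (1,0) = Complex.I ^ (2:ℤ) ∨ χ (1,0) = Complex.I ^ (3:ℤ) := by
      rcases mul_eq_zero.mp hufac with h | h
      · rcases mul_eq_zero.mp h with h | h
        · rcases mul_eq_zero.mp h with h | h
          · left; rw [zpow_zero, ← sub_eq_zero]; exact h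
          · right; right; left; rw [I_zpow_two, ← sub_eq_zero]; linear_combination h
        · right; left; rw [zpow_one, ← sub_eq_zero]; exact h
      · right; right; right; rw [I_zpow_three, ← sub_eq_zero]; linear_combination h
    rcases hv' with hv | hv
    · rcases hu' with hu | hu | hu | hu
      · exact ⟨(0, 0), main 0 0 0 0 (by decide) hu hv⟩
      · exact ⟨(3, 0), main 1 0 3 0 (by decide) hu hv⟩
      · exact ⟨(2, 0), main 2 0 2 0 (by decide) hu hv⟩
      · exact ⟨(1, 0), main 3 0 1 0 (by decide) hu hv⟩
    · rcases hu' with hu | hu | hu | hu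
      · exact ⟨(3, 1), main 0 2 3 1 (by decide) hu hv⟩
      · exact ⟨(0, 1), main 1 2 0 1 (by decide) hu hv⟩
      · exact ⟨(1, 1), main 2 2 1 1 (by decide) hu hv⟩
      · exact ⟨(2, 1), main 3 2 2 1 (by decide) hu hv⟩
end
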